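/- arXiv:1204.4874 — 9 statements merged into one kernel-verified Lean document; each statement's English description precedes it below -/
import Mathlib

section
/- Suppose A₁ - A₂ = g cᵀ and e₁ - e₂ = f g + μ c with μ ≥ 0. Then the set-valued map G defined by G(x) = {A₁x+e₁} if cᵀx+f < 0, G(x) = conv{A₁x+e₁, A₂x+e₂} if cᵀx+f = 0, and G(x) = {A₂x+e₂} if cᵀx+f > 0, is one-sided Lipschitz: there exists L such that (x₁−x₂)ᵀ(y₁−y₂) ≤ L‖x₁−x₂‖² for all x₁, x₂ ∈ ℝⁿ, y₁ ∈ G(x₁), y₂ ∈ G(x₂). -/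
open Matrix

/-- The convexified set-valued map of a bimodal piecewise affine system. -/
def bimodalG (n : ℕ) (A₁ A₂ : Matrix (Fin n) (Fin n) ℝ) (e₁ e₂ c : Fin n → ℝ)
    (f : ℝ) (x : Fin n → ℝ) : Set (Fin n → ℝ) :=
  if c ⬝ᵥ x + f < 0 then {A₁ *ᵥ x + e₁}
  else if c ⬝ᵥ x + f = 0 then convexHull ℝ {A₁ *ᵥ x + e₁, A₂ *ᵥ x + e₂}
  else {A₂ *ᵥ x + e₂}

private lemma aux_prod_le {n : ℕ} (d : Fin n → ℝ) (i j : Fin n) :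
    |d i| * |d j| ≤ ∑ k, d k * d k := by
  have hi : d i * d i ≤ ∑ k, d k * d k :=
    Finset.single_le_sum (fun k _ => mul_self_nonneg (d k)) (Finset.mem_univ i)
  have hj : d j * d j ≤ ∑ k, d k * d k :=
    Finset.single_le_sum (fun k _ => mul_self_nonneg (d k)) (Finset.mem_univ j)
  nlinarith [sq_nonneg (|d i| - |d j|), abs_mul_abs_self (d i), abs_mul_abs_self (d j)]

private lemma aux_abs_dot_le {n : ℕ} (u d : Fin n → ℝ) :
    |u ⬝ᵥ d| ≤ ∑ i, |u i| * |d i| := by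
  calc |u ⬝ᵥ d| ≤ ∑ i, |u i * d i| := Finset.abs_sum_le_sum_abs _ _
  _ = ∑ i, |u i| * |d i| := by simp [abs_mul]

private lemma aux_dot_prod_le {n : ℕ} (u v d : Fin n → ℝ) :
    |u ⬝ᵥ d| * |v ⬝ᵥ d| ≤ (∑ i, |u i|) * (∑ i, |v i|) * (∑ k, d k * d k) := by
  have h1 : |u ⬝ᵥ d| * |v ⬝ᵥ d| ≤ (∑ i, |u i| * |d i|) * (∑ j, |v j| * |d j|) := by
    apply mul_le_mul (aux_abs_dot_le u d) (aux_abs_dot_le v d) (abs_nonneg _)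
    exact Finset.sum_nonneg fun i _ => mul_nonneg (abs_nonneg _) (abs_nonneg _)
  refine h1.trans ?_
  rw [Finset.sum_mul_sum, Finset.sum_mul_sum, Finset.sum_mul]
  apply Finset.sum_le_sum
  intro i _
  rw [Finset.sum_mul]
  apply Finset.sum_le_sum
  intro j _
  have := aux_prod_le d i j
  have hn : 0 ≤ |u i| * |v j| := mul_nonneg (abs_nonneg _) (abs_nonneg _)
  calc |u i| * |d i| * (|v j| * |d j|) = (|u i| * |v j|) * (|d i| * |d j|) := by ring
  _ ≤ (|u i| * |v j|) * (∑ k, d k * d k) := by exact mul_le_mul_of_nonneg_left this hn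
  _ = |u i| * |v j| * ∑ k, d k * d k := rfl

private lemma aux_quad_le {n : ℕ} (A : Matrix (Fin n) (Fin n) ℝ) (d : Fin n → ℝ) :
    d ⬝ᵥ (A *ᵥ d) ≤ (∑ i, ∑ j, |A i j|) * (∑ k, d k * d k) := by
  have : d ⬝ᵥ (A *ᵥ d) = ∑ i, ∑ j, d i * (A i j * d j) := by
    simp [dotProduct, Matrix.mulVec, Finset.mul_sum]
  rw [this, Finset.sum_mul]
  apply Finset.sum_le_sum
  intro i _
  rw [Finset.sum_mul]
  apply Finset.sum_le_sum
  intro j _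
  calc d i * (A i j * d j) ≤ |d i * (A i j * d j)| := le_abs_self _
  _ = |A i j| * (|d i| * |d j|) := by rw [abs_mul, abs_mul]; ring
  _ ≤ |A i j| * (∑ k, d k * d k) := mul_le_mul_of_nonneg_left (aux_prod_le d i j) (abs_nonneg _)

private lemma aux_min_lip (a b : ℝ) : |min a 0 - min b 0| ≤ |a - b| := by
  rcases le_total a 0 with h | h <;> rcases le_total b 0 with h' | h' <;>
    simp [min_eq_left, min_eq_right, h, h'] <;>
    cases' abs_cases (a - b) with H H <;> cases' abs_cases a with H' H' <;>
    cases' abs_cases b with H'' H'' <;> linarith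

private lemma aux_tsign (t₁ t₂ s₁ s₂ : ℝ) (h10 : 0 ≤ t₁) (h11 : t₁ ≤ 1)
    (h20 : 0 ≤ t₂) (h21 : t₂ ≤ 1)
    (ha : s₁ < 0 → t₁ = 1) (hb : 0 < s₁ → t₁ = 0)
    (hc : s₂ < 0 → t₂ = 1) (hd : 0 < s₂ → t₂ = 0) :
    (t₁ - t₂) * (s₁ - s₂) ≤ 0 := by
  rcases lt_trichotomy s₁ 0 with h | h | h
  · rcases lt_trichotomy s₂ 0 with h' | h' | h'
    · rw [ha h, hc h']; norm_num
    · rw [ha h, h']; nlinarith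
    · rw [ha h, hd h']; nlinarith
  · rcases lt_trichotomy s₂ 0 with h' | h' | h'
    · rw [h, hc h']; nlinarith
    · rw [h, h']; simp
    · rw [h, hd h']; nlinarith
  · rw [hb h]; rcases lt_trichotomy s₂ 0 with h' | h' | h'
    · rw [hc h']; nlinarith
    · rw [h']; nlinarith
    · rw [hd h']; nlinarith

private lemma aux_mem_char {n : ℕ} {A₁ A₂ : Matrix (Fin n) (Fin n) ℝ}
    {e₁ e₂ g c : Fin n → ℝ} {f μ : ℝ}
    (hA : A₁ - A₂ = Matrix.vecMulVec g c)
    (he : e₁ - e₂ = f • g + μ • c)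
    {x y : Fin n → ℝ} (hy : y ∈ bimodalG n A₁ A₂ e₁ e₂ c f x) :
    ∃ t : ℝ, 0 ≤ t ∧ t ≤ 1 ∧ (c ⬝ᵥ x + f < 0 → t = 1) ∧ (0 < c ⬝ᵥ x + f → t = 0) ∧
      y = A₂ *ᵥ x + e₂ + (t * (c ⬝ᵥ x + f)) • g + (μ * t) • c := by
  have key : A₁ *ᵥ x + e₁ = A₂ *ᵥ x + e₂ + (c ⬝ᵥ x + f) • g + μ • c := by
    have h1 : A₁ *ᵥ x - A₂ *ᵥ x = (c ⬝ᵥ x) • g := by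
      rw [← Matrix.sub_mulVec, hA]
      funext i
      simp [Matrix.mulVec, Matrix.vecMulVec, dotProduct, Finset.mul_sum, mul_assoc,
        mul_comm, mul_left_comm]
    have h2 : e₁ - e₂ = f • g + μ • c := he
    have : A₁ *ᵥ x + e₁ = (A₁ *ᵥ x - A₂ *ᵥ x) + (e₁ - e₂) + (A₂ *ᵥ x + e₂) := by abel
    rw [this, h1, h2, add_smul]
    abel
  unfold bimodalG at hy
  split_ifs at hy with h1 h2
  · refine ⟨1, zero_le_one, le_refl 1, fun _ => rfl, fun h => absurd h (by linarith), ?_⟩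
    simp only [Set.mem_singleton_iff] at hy
    rw [hy, key, one_mul, mul_one]
  · rw [convexHull_pair] at hy
    obtain ⟨u, v, hu, hv, huv, hy⟩ := hy
    refine ⟨u, hu, by linarith, fun h => absurd h h1, fun h => absurd h2 (by linarith), ?_⟩
    rw [← hy, key, h2]
    have hv1 : v = 1 - u := by linarith
    rw [hv1]
    module
  · refine ⟨0, le_refl 0, zero_le_one, fun h => absurd h h1, fun _ => rfl, ?_⟩
    simp only [Set.mem_singleton_iff] at hy
    rw [hy]
    simp

theorem bimodalG_one_sided_Lipschitz (n : ℕ)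
    (A₁ A₂ : Matrix (Fin n) (Fin n) ℝ) (e₁ e₂ g c : Fin n → ℝ) (f μ : ℝ)
    (hμ : 0 ≤ μ)
    (hA : A₁ - A₂ = Matrix.vecMulVec g c)
    (he : e₁ - e₂ = f • g + μ • c) :
    ∃ L : ℝ, ∀ x₁ x₂ y₁ y₂ : Fin n → ℝ,
      y₁ ∈ bimodalG n A₁ A₂ e₁ e₂ c f x₁ →
      y₂ ∈ bimodalG n A₁ A₂ e₁ e₂ c f x₂ →
      (x₁ - x₂) ⬝ᵥ (y₁ - y₂) ≤ L * ((x₁ - x₂) ⬝ᵥ (x₁ - x₂)) := by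
  refine ⟨(∑ i, ∑ j, |A₂ i j|) + (∑ i, |c i|) * (∑ i, |g i|), ?_⟩
  intro x₁ x₂ y₁ y₂ hy₁ hy₂
  obtain ⟨t₁, ht10, ht11, ht1a, ht1b, hy1⟩ := aux_mem_char hA he hy₁
  obtain ⟨t₂, ht20, ht21, ht2a, ht2b, hy2⟩ := aux_mem_char hA he hy₂
  set s₁ := c ⬝ᵥ x₁ + f with hs₁
  set s₂ := c ⬝ᵥ x₂ + f with hs₂
  set d := x₁ - x₂ with hd
  have hQ : d ⬝ᵥ d = ∑ k, d k * d k := rfl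
  -- decompose y₁ - y₂
  have hdiff : y₁ - y₂ = A₂ *ᵥ d + (t₁ * s₁ - t₂ * s₂) • g + (μ * (t₁ - t₂)) • c := by
    rw [hy1, hy2, hd, Matrix.mulVec_sub]
    module
  have hdot : d ⬝ᵥ (y₁ - y₂) =
      d ⬝ᵥ (A₂ *ᵥ d) + (t₁ * s₁ - t₂ * s₂) * (d ⬝ᵥ g) + (μ * (t₁ - t₂)) * (d ⬝ᵥ c) := by
    rw [hdiff, dotProduct_add, dotProduct_add, dotProduct_smul, dotProduct_smul,
      smul_eq_mul, smul_eq_mul]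
  have hcd : d ⬝ᵥ c = s₁ - s₂ := by
    rw [dotProduct_comm, hd, dotProduct_sub, hs₁, hs₂]; ring
  -- bound 1
  have hb1 : d ⬝ᵥ (A₂ *ᵥ d) ≤ (∑ i, ∑ j, |A₂ i j|) * (∑ k, d k * d k) := aux_quad_le A₂ d
  -- bound 3
  have hb3 : (μ * (t₁ - t₂)) * (d ⬝ᵥ c) ≤ 0 := by
    rw [hcd, mul_assoc]
    exact mul_nonpos_of_nonneg_of_nonpos hμ
      (aux_tsign t₁ t₂ s₁ s₂ ht10 ht11 ht20 ht21 ht1a ht1b ht2a ht2b)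
  -- bound 2
  have hm1 : t₁ * s₁ = min s₁ 0 := by
    rcases lt_trichotomy s₁ 0 with h | h | h
    · rw [ht1a h, one_mul, min_eq_left h.le]
    · rw [h, mul_zero, min_self]
    · rw [ht1b h, zero_mul, min_eq_right h.le]
  have hm2 : t₂ * s₂ = min s₂ 0 := by
    rcases lt_trichotomy s₂ 0 with h | h | h
    · rw [ht2a h, one_mul, min_eq_left h.le]
    · rw [h, mul_zero, min_self]
    · rw [ht2b h, zero_mul, min_eq_right h.le]
  have hmabs : |t₁ * s₁ - t₂ * s₂| ≤ |s₁ - s₂| := by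
    rw [hm1, hm2]; exact aux_min_lip s₁ s₂
  have hb2 : (t₁ * s₁ - t₂ * s₂) * (d ⬝ᵥ g) ≤ (∑ i, |c i|) * (∑ i, |g i|) * (∑ k, d k * d k) := by
    calc (t₁ * s₁ - t₂ * s₂) * (d ⬝ᵥ g) ≤ |(t₁ * s₁ - t₂ * s₂) * (d ⬝ᵥ g)| := le_abs_self _
    _ = |t₁ * s₁ - t₂ * s₂| * |d ⬝ᵥ g| := abs_mul _ _
    _ ≤ |s₁ - s₂| * |d ⬝ᵥ g| := by
        exact mul_le_mul_of_nonneg_right hmabs (abs_nonneg _)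
    _ = |c ⬝ᵥ d| * |g ⬝ᵥ d| := by rw [← hcd, dotProduct_comm d c, dotProduct_comm d g]
    _ ≤ (∑ i, |c i|) * (∑ i, |g i|) * (∑ k, d k * d k) := aux_dot_prod_le c g d
  rw [hdot, hQ]
  nlinarith [hb1, hb2, hb3]
end

section
/- Suppose the set-valued map G (defined by G(x) = {A₁x+e₁} if cᵀx+f < 0, G(x) = conv{A₁x+e₁, A₂x+e₂} if cᵀx+f = 0, and G(x) = {A₂x+e₂} if cᵀx+f > 0) is one-sided Lipschitz. Then there exist g ∈ ℝⁿ and μ ≥ 0 such that A₁ − A₂ = g cᵀ and e₁ − e₂ = f g + μ c. -/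
open Matrix

lemma aux_le_zero (a C : ℝ) (h : ∀ t : ℝ, 0 < t → t * a ≤ t ^ 2 * C) : a ≤ 0 := by
  by_contra h'
  push_neg at h'
  have h2 : ∀ t : ℝ, 0 < t → a ≤ t * C := by
    intro t ht
    have := h t ht
    rw [pow_two, mul_assoc] at this
    exact (mul_le_mul_iff_right₀ ht).mp this
  rcases le_or_gt C 0 with hC | hC
  · have := h2 1 one_pos; nlinarith
  · have ht : 0 < a / (2 * C) := by positivity
    have h3 := h2 (a / (2 * C)) ht
    have h4 : a / (2 * C) * C = a / 2 := by field_simp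
    rw [h4] at h3
    linarith

lemma aux_eq_zero (a b : ℝ) (h : ∀ s : ℝ, 0 ≤ a + s * b) : b = 0 := by
  by_contra hb
  have := h ((-a - 1) / b)
  rw [div_mul_cancel₀ _ hb] at this
  linarith

lemma aux_span {n : ℕ} (c v : Fin n → ℝ) (hc : c ⬝ᵥ c ≠ 0)
    (h : ∀ d : Fin n → ℝ, c ⬝ᵥ d = 0 → d ⬝ᵥ v = 0) :
    v = ((c ⬝ᵥ v) / (c ⬝ᵥ c)) • c := by
  set k := (c ⬝ᵥ v) / (c ⬝ᵥ c) with hk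
  set w := v - k • c with hw
  have hcw : c ⬝ᵥ w = 0 := by
    rw [hw, dotProduct_sub, dotProduct_smul, smul_eq_mul, hk]
    field_simp
    ring
  have h1 : w ⬝ᵥ v = 0 := h w hcw
  have h2 : w ⬝ᵥ c = 0 := by rwa [dotProduct_comm] at hcw
  have h3 : w ⬝ᵥ w = 0 := by
    rw [hw, dotProduct_sub, dotProduct_smul, smul_eq_mul]
    rw [hw] at h1 h2
    rw [h1]
    rw [h2]
    ring
  have h4 : w = 0 := dotProduct_self_eq_zero.mp h3
  have : v - k • c = 0 := h4
  linear_combination (norm := module) this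

theorem one_sided_Lipschitz_necessary (n : ℕ)
    (A₁ A₂ : Matrix (Fin n) (Fin n) ℝ) (e₁ e₂ c : Fin n → ℝ) (f : ℝ)
    (hc : c ≠ 0)
    (hL : ∃ L : ℝ, ∀ x₁ x₂ y₁ y₂ : Fin n → ℝ,
      y₁ ∈ bimodalG n A₁ A₂ e₁ e₂ c f x₁ →
      y₂ ∈ bimodalG n A₁ A₂ e₁ e₂ c f x₂ →
      (x₁ - x₂) ⬝ᵥ (y₁ - y₂) ≤ L * ((x₁ - x₂) ⬝ᵥ (x₁ - x₂))) :
    ∃ (g : Fin n → ℝ) (μ : ℝ), 0 ≤ μ ∧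
      A₁ - A₂ = Matrix.vecMulVec g c ∧ e₁ - e₂ = f • g + μ • c := by
  obtain ⟨L, hL⟩ := hL
  have hcc : 0 < c ⬝ᵥ c := by
    have h0 : 0 ≤ c ⬝ᵥ c := Finset.sum_nonneg fun i _ => mul_self_nonneg (c i)
    rcases lt_or_eq_of_le h0 with h | h
    · exact h
    · exact absurd (dotProduct_self_eq_zero.mp h.symm) hc
  set D : Matrix (Fin n) (Fin n) ℝ := A₁ - A₂ with hD
  set ε : Fin n → ℝ := e₁ - e₂ with hε
  -- Key claim: for x̄ on the hyperplane and d crossing it positively,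
  -- d ⬝ᵥ (D *ᵥ x̄ + ε) ≥ 0.
  have claim1 : ∀ xb : Fin n → ℝ, c ⬝ᵥ xb + f = 0 →
      ∀ d : Fin n → ℝ, 0 < c ⬝ᵥ d → 0 ≤ d ⬝ᵥ (D *ᵥ xb + ε) := by
    intro xb hxb d hd
    have key : ∀ t : ℝ, 0 < t →
        t * (2 * -(d ⬝ᵥ (D *ᵥ xb + ε))) ≤
          t ^ 2 * (4 * L * (d ⬝ᵥ d) - 2 * (d ⬝ᵥ (A₁ *ᵥ d)) - 2 * (d ⬝ᵥ (A₂ *ᵥ d))) := by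
      intro t ht
      have h1 : c ⬝ᵥ (xb + t • d) + f = t * (c ⬝ᵥ d) := by
        rw [dotProduct_add, dotProduct_smul, smul_eq_mul]; linarith
      have h2 : c ⬝ᵥ (xb - t • d) + f = -(t * (c ⬝ᵥ d)) := by
        rw [dotProduct_sub, dotProduct_smul, smul_eq_mul]; linarith
      have hpos : 0 < t * (c ⬝ᵥ d) := mul_pos ht hd
      have mem1 : A₂ *ᵥ (xb + t • d) + e₂ ∈ bimodalG n A₁ A₂ e₁ e₂ c f (xb + t • d) := by
        unfold bimodalG
        rw [if_neg (by rw [h1]; linarith), if_neg (by rw [h1]; linarith)]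
        exact rfl
      have mem2 : A₁ *ᵥ (xb - t • d) + e₁ ∈ bimodalG n A₁ A₂ e₁ e₂ c f (xb - t • d) := by
        unfold bimodalG
        rw [if_pos (by rw [h2]; linarith)]
        exact rfl
      have ineq := hL (xb + t • d) (xb - t • d) _ _ mem1 mem2
      have hx : (xb + t • d) - (xb - t • d) = (2 * t) • d := by
        module
      rw [hx] at ineq
      simp only [hD, hε, sub_mulVec, mulVec_add, mulVec_sub, mulVec_smul,
        dotProduct_add, dotProduct_sub, dotProduct_smul, smul_dotProduct,
        smul_eq_mul] at ineq ⊢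
      nlinarith [ineq]
    have := aux_le_zero _ _ key
    linarith
  -- Step 2: on the hyperplane, D *ᵥ x̄ + ε is a nonnegative multiple of c.
  have hccne : c ⬝ᵥ c ≠ 0 := ne_of_gt hcc
  have step2 : ∀ xb : Fin n → ℝ, c ⬝ᵥ xb + f = 0 →
      ∀ d : Fin n → ℝ, c ⬝ᵥ d = 0 → d ⬝ᵥ (D *ᵥ xb + ε) = 0 := by
    intro xb hxb d hd
    have h1 : ∀ s : ℝ, 0 ≤ c ⬝ᵥ (D *ᵥ xb + ε) + s * (d ⬝ᵥ (D *ᵥ xb + ε)) := by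
      intro s
      have hcd : 0 < c ⬝ᵥ (c + s • d) := by
        rw [dotProduct_add, dotProduct_smul, smul_eq_mul, hd]
        simpa using hcc
      have := claim1 xb hxb (c + s • d) hcd
      rwa [add_dotProduct, smul_dotProduct, smul_eq_mul] at this
    exact aux_eq_zero _ _ h1
  -- Step 4: D *ᵥ w = 0 for all w ⊥ c.
  obtain ⟨x₀, hx₀, hx₀H⟩ : ∃ x₀ : Fin n → ℝ, x₀ = (-f / (c ⬝ᵥ c)) • c ∧
      c ⬝ᵥ x₀ + f = 0 := by
    refine ⟨_, rfl, ?_⟩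
    rw [dotProduct_smul, smul_eq_mul]
    field_simp
    ring
  have step4 : ∀ w : Fin n → ℝ, c ⬝ᵥ w = 0 → D *ᵥ w = 0 := by
    intro w hw
    have hmem : ∀ s : ℝ, c ⬝ᵥ (x₀ + s • w) + f = 0 := by
      intro s
      rw [dotProduct_add, dotProduct_smul, smul_eq_mul, hw]
      linarith
    have hcDw : c ⬝ᵥ (D *ᵥ w) = 0 := by
      apply aux_eq_zero (c ⬝ᵥ (D *ᵥ x₀ + ε))
      intro s
      have := claim1 (x₀ + s • w) (hmem s) c (by simpa using hcc)
      rw [mulVec_add, mulVec_smul] at this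
      calc 0 ≤ c ⬝ᵥ (D *ᵥ x₀ + s • (D *ᵥ w) + ε) := this
        _ = c ⬝ᵥ (D *ᵥ x₀ + ε) + s * (c ⬝ᵥ (D *ᵥ w)) := by
            simp [dotProduct_add, dotProduct_smul, smul_eq_mul]; ring
    have hperp : ∀ d : Fin n → ℝ, c ⬝ᵥ d = 0 → d ⬝ᵥ (D *ᵥ w) = 0 := by
      intro d hd
      have ha := step2 (x₀ + 1 • w) (hmem 1) d hd
      have hb := step2 x₀ hx₀H d hd
      rw [mulVec_add, mulVec_smul] at ha
      have : d ⬝ᵥ (D *ᵥ x₀ + (1:ℝ) • (D *ᵥ w) + ε)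
          = d ⬝ᵥ (D *ᵥ x₀ + ε) + d ⬝ᵥ (D *ᵥ w) := by
        simp [dotProduct_add]; ring
      rw [this, hb] at ha
      linarith
    have := aux_span c (D *ᵥ w) hccne hperp
    rw [hcDw] at this
    simpa using this
  -- Define g and μ
  set g : Fin n → ℝ := (c ⬝ᵥ c)⁻¹ • (D *ᵥ c) with hg
  set μ : ℝ := (c ⬝ᵥ (D *ᵥ x₀ + ε)) / (c ⬝ᵥ c) with hμ
  have hμ0 : 0 ≤ μ := by
    have := claim1 x₀ hx₀H c (by simpa using hcc)
    exact div_nonneg this (le_of_lt hcc)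
  -- D *ᵥ x = (c ⬝ᵥ x / (c ⬝ᵥ c)) • (D *ᵥ c) for every x
  have hDx : ∀ x : Fin n → ℝ, D *ᵥ x = ((c ⬝ᵥ x) / (c ⬝ᵥ c)) • (D *ᵥ c) := by
    intro x
    set w : Fin n → ℝ := x - ((c ⬝ᵥ x) / (c ⬝ᵥ c)) • c with hwdef
    have hcw : c ⬝ᵥ w = 0 := by
      rw [hwdef, dotProduct_sub, dotProduct_smul, smul_eq_mul]
      field_simp
      ring
    have h0 := step4 w hcw
    rw [hwdef, mulVec_sub, mulVec_smul, sub_eq_zero] at h0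
    exact h0
  refine ⟨g, μ, hμ0, ?_, ?_⟩
  · ext i j
    have := congrFun (hDx (Pi.single j 1)) i
    rw [show D *ᵥ Pi.single j 1 = fun i => D i j * 1 from funext fun _ => dotProduct_single _ _ _] at this
    simp only [mul_one] at this
    rw [dotProduct_single, mul_one] at this
    rw [this, vecMulVec_apply, hg]
    simp only [Pi.smul_apply, smul_eq_mul]
    field_simp
  · have hspan := aux_span c (D *ᵥ x₀ + ε) hccne (step2 x₀ hx₀H)
    have hDx₀ : D *ᵥ x₀ = (-f) • g := by
      rw [hDx x₀, hx₀, dotProduct_smul, smul_eq_mul, hg, smul_smul]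
      congr 1
      field_simp
    have h5 : ε = μ • c - D *ᵥ x₀ := by
      rw [hμ, ← hspan]
      abel
    show ε = f • g + μ • c
    rw [h5, hDx₀]
    module
end

section
/- Suppose A₁ − A₂ = g cᵀ for some g ∈ ℝⁿ and (A₁−A₂)x̄ + (e₁−e₂) lies in the polar cone of {x : cᵀx ≤ 0} for some x̄ with cᵀx̄ + f = 0. Then e₁ − e₂ = f g + μ c for some μ ≥ 0. -/
open Matrix

theorem affine_term_in_polar_cone (n : ℕ)
    (A₁ A₂ : Matrix (Fin n) (Fin n) ℝ) (e₁ e₂ g c : Fin n → ℝ) (f : ℝ)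
    (xbar : Fin n → ℝ) (hc : c ≠ 0)
    (hA : A₁ - A₂ = Matrix.vecMulVec g c)
    (hxbar : c ⬝ᵥ xbar + f = 0)
    (hpolar : ∀ x : Fin n → ℝ, c ⬝ᵥ x ≤ 0 →
      x ⬝ᵥ ((A₁ - A₂) *ᵥ xbar + (e₁ - e₂)) ≤ 0) :
    ∃ μ : ℝ, 0 ≤ μ ∧ e₁ - e₂ = f • g + μ • c := by
  set w : Fin n → ℝ := (A₁ - A₂) *ᵥ xbar + (e₁ - e₂) with hw
  have hwval : w = e₁ - e₂ - f • g := by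
    rw [hw, hA]
    funext i
    simp [Matrix.vecMulVec, Matrix.mulVec, dotProduct]
    have : ∑ j, g i * c j * xbar j = g i * (c ⬝ᵥ xbar) := by
      simp [dotProduct, Finset.mul_sum, mul_assoc]
    rw [this]
    have : c ⬝ᵥ xbar = -f := by linarith
    rw [this]; ring
  have hcc : (0:ℝ) < c ⬝ᵥ c := by
    have : c ⬝ᵥ c ≠ 0 := by
      intro h
      exact hc (by
        funext i
        have := dotProduct_self_eq_zero.mp h
        exact congrFun this i)
    have h0 : 0 ≤ c ⬝ᵥ c := Finset.sum_nonneg fun i _ => mul_self_nonneg _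
    cases lt_or_eq_of_le h0 with
    | inl h => exact h
    | inr h => exact absurd h.symm this
  set μ : ℝ := (c ⬝ᵥ w) / (c ⬝ᵥ c) with hμ
  set p : Fin n → ℝ := w - μ • c with hp
  have hcp : c ⬝ᵥ p = 0 := by
    rw [hp, dotProduct_sub, dotProduct_smul, hμ]
    rw [smul_eq_mul, div_mul_cancel₀ _ hcc.ne', sub_self]
  have hpw1 := hpolar p (le_of_eq hcp)
  have hpw2 := hpolar (-p) (by rw [dotProduct_neg, hcp]; simp)
  rw [neg_dotProduct] at hpw2
  have hpw : p ⬝ᵥ w = 0 := le_antisymm hpw1 (by linarith)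
  have hpp : p ⬝ᵥ p = 0 := by
    rw [hp, dotProduct_sub]
    rw [show (w - μ • c) ⬝ᵥ w = p ⬝ᵥ w from rfl, hpw]
    rw [dotProduct_smul, dotProduct_comm, hcp]
    simp
  have hp0 : p = 0 := by
    funext i
    exact congrFun (dotProduct_self_eq_zero.mp hpp) i
  have hwμc : w = μ • c := by
    have := hp0
    rw [hp] at this
    linear_combination (norm := (funext i; simp)) this
  have hμ0 : 0 ≤ μ := by
    have h := hpolar (-c) (by rw [dotProduct_neg]; linarith)
    rw [neg_dotProduct] at h
    have hcw : 0 ≤ c ⬝ᵥ w := by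
      have := dotProduct_comm c w; linarith
    exact div_nonneg hcw (le_of_lt hcc)
  refine ⟨μ, hμ0, ?_⟩
  have : e₁ - e₂ - f • g = μ • c := by rw [← hwval, hwμc]
  funext i
  have hi := congrFun this i
  simp at hi ⊢
  linarith
end

section
/- Let P₁, P₂ be m×n real matrices with P₁ of full row rank and q₁, q₂ ∈ ℝᵐ. If P₁ = M P₂ and q₁ = M q₂ for some m×m lower triangular matrix M with positive diagonal entries, then for all x ∈ ℝⁿ, P₁x − q₁ ≺ 0 implies P₂x − q₂ ≺ 0 (where ≺ is lexicographic negativity: the vector is nonzero and its first nonzero entry is negative). -/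
open Matrix

/-- `v ≻ 0`: `v` is nonzero and its first nonzero entry is positive. -/
def lexPos {m : ℕ} (v : Fin m → ℝ) : Prop :=
  ∃ k : Fin m, 0 < v k ∧ ∀ j : Fin m, j < k → v j = 0

/-- `v ≺ 0`: `v` is nonzero and its first nonzero entry is negative. -/
def lexNeg {m : ℕ} (v : Fin m → ℝ) : Prop := lexPos (-v)

theorem lex_implication_of_triangular_relation (m n : ℕ)
    (P₁ P₂ : Matrix (Fin m) (Fin n) ℝ) (q₁ q₂ : Fin m → ℝ)
    (hrank : LinearIndependent ℝ P₁)
    (M : Matrix (Fin m) (Fin m) ℝ)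
    (hMlow : ∀ i j : Fin m, i < j → M i j = 0)
    (hMdiag : ∀ i : Fin m, 0 < M i i)
    (hP : P₁ = M * P₂) (hq : q₁ = M *ᵥ q₂) :
    ∀ x : Fin n → ℝ, lexNeg (P₁ *ᵥ x - q₁) → lexNeg (P₂ *ᵥ x - q₂) := by
  intro x h
  set v₂ : Fin m → ℝ := P₂ *ᵥ x - q₂ with hv₂
  have hrel : P₁ *ᵥ x - q₁ = M *ᵥ v₂ := by
    rw [hv₂, Matrix.mulVec_sub, hP, hq, Matrix.mulVec_mulVec]
  obtain ⟨k', hk'pos, hk'zero⟩ := h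
  rw [hrel] at hk'pos hk'zero
  -- v₂ is nonzero
  have hv₂ne : v₂ ≠ 0 := by
    intro h0
    rw [h0] at hk'pos
    simp at hk'pos
  -- let k be the minimal index with v₂ k ≠ 0
  have hS : (Finset.univ.filter fun i => v₂ i ≠ 0).Nonempty := by
    rcases Function.ne_iff.1 hv₂ne with ⟨i, hi⟩
    exact ⟨i, by simpa using hi⟩
  set k := (Finset.univ.filter fun i => v₂ i ≠ 0).min' hS with hk
  have hkmem : v₂ k ≠ 0 := by
    have := (Finset.univ.filter fun i => v₂ i ≠ 0).min'_mem hS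
    simpa using this
  have hkmin : ∀ j, j < k → v₂ j = 0 := by
    intro j hj
    by_contra hjne
    have : k ≤ j := (Finset.univ.filter fun i => v₂ i ≠ 0).min'_le j (by simp [hjne])
    exact absurd hj (not_lt.2 this)
  -- (M *ᵥ v₂) j = 0 for j < k, and (M *ᵥ v₂) k = M k k * v₂ k
  have hMv : ∀ j : Fin m, j ≤ k → (M *ᵥ v₂) j = M j j * v₂ j := by
    intro j hj
    rw [Matrix.mulVec]
    simp only [dotProduct]
    rw [Finset.sum_eq_single j]
    · intro b _ hb
      rcases lt_or_gt_of_ne hb with hlt | hgt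
      · rw [hkmin b (lt_of_lt_of_le hlt hj), mul_zero]
      · rw [hMlow j b hgt, zero_mul]
    · intro hb; exact absurd (Finset.mem_univ j) hb
  -- k' = k
  have hkk' : k' = k := by
    rcases lt_trichotomy k' k with hlt | heq | hgt
    · have h1 : (M *ᵥ v₂) k' = 0 := by rw [hMv k' hlt.le, hkmin k' hlt, mul_zero]
      simp [h1] at hk'pos
    · exact heq
    · have h1 : (M *ᵥ v₂) k = 0 := by simpa using hk'zero k hgt
      rw [hMv k le_rfl] at h1
      exact absurd (mul_eq_zero.1 h1) (by push_neg; exact ⟨(hMdiag k).ne', hkmem⟩)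
  subst hkk'
  refine ⟨k, ?_, fun j hj => ?_⟩
  · have := hk'pos
    rw [Pi.neg_apply, hMv k le_rfl] at this
    have hv2k : v₂ k < 0 := by
      nlinarith [hMdiag k]
    simpa using hv2k
  · simp [hkmin j hj]
end

section
/- Let P₁, P₂ be m×n real matrices and q₁, q₂ ∈ ℝᵐ, and suppose there exist 1 ≤ ℓ ≤ m and an ℓ×ℓ lower triangular matrix M with positive diagonal entries such that P₁^[ℓ] = M P₂^[ℓ] and q₁^[ℓ] ≺ M q₂^[ℓ], where •^[ℓ] denotes the first ℓ rows. Then for all x, P₁x ≺ q₁ implies P₂x ≺ q₂. -/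
open Matrix

lemma lexPos_add_aux {m : ℕ} {w u : Fin m → ℝ}
    (hw : lexPos w) (hu : lexPos u ∨ u = 0) : lexPos (w + u) := by
  obtain ⟨k, hk, hk0⟩ := hw
  rcases hu with ⟨k', hk', hk'0⟩ | rfl
  · rcases lt_trichotomy k k' with h | rfl | h
    · exact ⟨k, by simp [hk'0 k h, hk], fun j hj => by
        simp [hk0 j hj, hk'0 j (hj.trans h)]⟩
    · exact ⟨k, by simpa using add_pos hk hk', fun j hj => by
        simp [hk0 j hj, hk'0 j hj]⟩
    · exact ⟨k', by simp [hk0 k' h, hk'], fun j hj => by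
        simp [hk'0 j hj, hk0 j (hj.trans h)]⟩
  · exact ⟨k, by simpa using hk, fun j hj => by simp [hk0 j hj]⟩

lemma lexPos_of_mulVec {ℓ : ℕ} {M : Matrix (Fin ℓ) (Fin ℓ) ℝ}
    (hMlow : ∀ i j : Fin ℓ, i < j → M i j = 0) (hMdiag : ∀ i : Fin ℓ, 0 < M i i)
    {v : Fin ℓ → ℝ} (h : lexPos (M *ᵥ v)) : lexPos v := by
  obtain ⟨k, hk, hk0⟩ := h
  have hz : ∀ j : Fin ℓ, j < k → v j = 0 := by
    have H : ∀ t : ℕ, ∀ j : Fin ℓ, (j : ℕ) = t → j < k → v j = 0 := by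
      intro t
      induction t using Nat.strong_induction_on with
      | _ t ih =>
        rintro j rfl hj
        have h0 : (M *ᵥ v) j = 0 := hk0 j hj
        have hsum : (M *ᵥ v) j = M j j * v j := by
          rw [mulVec, dotProduct]
          refine Finset.sum_eq_single j ?_ (by simp)
          intro b _ hb
          rcases lt_or_gt_of_ne hb with hlt | hgt
          · simp [ih (b : ℕ) hlt b rfl (hlt.trans hj)]
          · simp [hMlow j b hgt]
        have := hsum ▸ h0
        rcases mul_eq_zero.mp this with h | h
        · exact absurd h (ne_of_gt (hMdiag j))
        · exact h
    exact fun j => H (j : ℕ) j rfl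
  have hkk : (M *ᵥ v) k = M k k * v k := by
    rw [mulVec, dotProduct]
    refine Finset.sum_eq_single k ?_ (by simp)
    intro b _ hb
    rcases lt_or_gt_of_ne hb with hlt | hgt
    · simp [hz b hlt]
    · simp [hMlow k b hgt]
  refine ⟨k, ?_, hz⟩
  by_contra hle
  push_neg at hle
  have : (M *ᵥ v) k ≤ 0 := hkk ▸ mul_nonpos_of_nonneg_of_nonpos (hMdiag k).le hle
  linarith

theorem lex_implication_of_truncated_relation (m n ℓ : ℕ)
    (P₁ P₂ : Matrix (Fin m) (Fin n) ℝ) (q₁ q₂ : Fin m → ℝ)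
    (hℓ₁ : 1 ≤ ℓ) (hℓm : ℓ ≤ m)
    (M : Matrix (Fin ℓ) (Fin ℓ) ℝ)
    (hMlow : ∀ i j : Fin ℓ, i < j → M i j = 0)
    (hMdiag : ∀ i : Fin ℓ, 0 < M i i)
    (hP : P₁.submatrix (Fin.castLE hℓm) id = M * P₂.submatrix (Fin.castLE hℓm) id)
    (hq : lexPos (M *ᵥ (fun i : Fin ℓ => q₂ (Fin.castLE hℓm i)) -
      (fun i : Fin ℓ => q₁ (Fin.castLE hℓm i)))) :
    ∀ x : Fin n → ℝ, lexPos (q₁ - P₁ *ᵥ x) → lexPos (q₂ - P₂ *ᵥ x) := by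
  intro x hx
  -- the truncation of q₂ - P₂ x
  set v : Fin ℓ → ℝ := fun i => (q₂ - P₂ *ᵥ x) (Fin.castLE hℓm i) with hv
  -- truncation of q₁ - P₁ x
  set u : Fin ℓ → ℝ := fun i => (q₁ - P₁ *ᵥ x) (Fin.castLE hℓm i) with huu
  have hsub : ∀ (A : Matrix (Fin m) (Fin n) ℝ),
      (A.submatrix (Fin.castLE hℓm) id) *ᵥ x = fun i => (A *ᵥ x) (Fin.castLE hℓm i) := by
    intro A
    funext i
    simp [mulVec, dotProduct, submatrix]
  have hrow : ∀ i : Fin ℓ, (P₁ *ᵥ x) (Fin.castLE hℓm i)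
      = (M *ᵥ fun j => (P₂ *ᵥ x) (Fin.castLE hℓm j)) i := by
    intro i
    have h1 : (fun j => (P₁ *ᵥ x) (Fin.castLE hℓm j))
        = M *ᵥ fun j => (P₂ *ᵥ x) (Fin.castLE hℓm j) := by
      rw [← hsub P₁, ← hsub P₂, hP, mulVec_mulVec]
    exact congrFun h1 i
  have key : M *ᵥ v = (M *ᵥ (fun i : Fin ℓ => q₂ (Fin.castLE hℓm i)) -
      (fun i : Fin ℓ => q₁ (Fin.castLE hℓm i))) + u := by
    funext i
    have : M *ᵥ v = M *ᵥ (fun j => q₂ (Fin.castLE hℓm j))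
        - M *ᵥ (fun j => (P₂ *ᵥ x) (Fin.castLE hℓm j)) := by
      rw [← mulVec_sub]
      congr 1
    rw [this]
    simp only [Pi.sub_apply, Pi.add_apply, huu, Pi.sub_apply]
    rw [← hrow i]
    ring
  -- u is lexPos or zero
  have hu : lexPos u ∨ u = 0 := by
    obtain ⟨k, hk, hk0⟩ := hx
    by_cases hkl : (k : ℕ) < ℓ
    · left
      refine ⟨⟨k, hkl⟩, by simpa [huu] using hk, ?_⟩
      intro j hj
      exact hk0 _ (by simpa [Fin.lt_def] using hj)
    · right
      funext j
      exact hk0 _ (by simp [Fin.lt_def]; omega)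
  have hMv : lexPos (M *ᵥ v) := key ▸ lexPos_add_aux hq hu
  obtain ⟨k, hk, hk0⟩ := lexPos_of_mulVec hMlow hMdiag hMv
  refine ⟨Fin.castLE hℓm k, hk, ?_⟩
  intro j hj
  have hjl : (j : ℕ) < ℓ := lt_of_lt_of_le (by simpa [Fin.lt_def] using hj) k.isLt.le
  have := hk0 ⟨j, hjl⟩ (by simpa [Fin.lt_def] using hj)
  simpa [hv] using this
end

section
/- Let the lexicographic implication 'P₁x ≺ q₁ ⟹ P₂x ⪯ q₂ for all x' hold, where P₁, P₂ are m×n matrices of full row rank and q₁, q₂ ∈ ℝᵐ. Then either P₁ = MP₂ and q₁ = Mq₂ for some m×m lower triangular matrix M with positive diagonal entries, or there exist 1 ≤ ℓ ≤ m and an ℓ×ℓ lower triangular matrix M with positive diagonal entries such that P₁^[ℓ] = M P₂^[ℓ] and q₁^[ℓ] ≺ M q₂^[ℓ]. -/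
open Matrix

namespace LexAux

lemma dp_self_nonneg {n : ℕ} (v : Fin n → ℝ) : 0 ≤ v ⬝ᵥ v := by
  unfold dotProduct
  exact Finset.sum_nonneg fun i _ => mul_self_nonneg _

lemma dp_self_pos {n : ℕ} {v : Fin n → ℝ} (hv : v ≠ 0) : 0 < v ⬝ᵥ v := by
  rcases lt_or_eq_of_le (dp_self_nonneg v) with h | h
  · exact h
  · exact absurd (dotProduct_self_eq_zero.mp h.symm) hv

/-- If `g` vanishes on the kernel of `a`, then `g` is a multiple of `a`. -/
lemma span_of_ker {n : ℕ} {a g : Fin n → ℝ} (ha : a ≠ 0)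
    (h : ∀ z, a ⬝ᵥ z = 0 → g ⬝ᵥ z = 0) :
    g = ((g ⬝ᵥ a) / (a ⬝ᵥ a)) • a := by
  set c : ℝ := (g ⬝ᵥ a) / (a ⬝ᵥ a) with hc
  have haa : a ⬝ᵥ a ≠ 0 := ne_of_gt (dp_self_pos ha)
  have haz : a ⬝ᵥ (g - c • a) = 0 := by
    rw [dotProduct_sub, dotProduct_smul, smul_eq_mul, hc, dotProduct_comm a g]
    field_simp
    ring
  have hgz : g ⬝ᵥ (g - c • a) = 0 := h _ haz
  have hzz : (g - c • a) ⬝ᵥ (g - c • a) = 0 := by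
    rw [sub_dotProduct, smul_dotProduct, haz, smul_zero, sub_zero, hgz]
  have h0 : g - c • a = 0 := dotProduct_self_eq_zero.mp hzz
  have := sub_eq_zero.mp h0
  exact this
  

lemma lexPos_succ {k : ℕ} {v : Fin (k+1) → ℝ} (h0 : v 0 = 0)
    (h : lexPos (fun i : Fin k => v i.succ)) : lexPos v := by
  obtain ⟨j, hj, hz⟩ := h
  refine ⟨j.succ, hj, fun i hi => ?_⟩
  induction i using Fin.cases with
  | zero => exact h0
  | succ i => exact hz i (Fin.succ_lt_succ_iff.mp hi)

lemma lexPos_of_succ {k : ℕ} {v : Fin (k+1) → ℝ} (h0 : v 0 = 0)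
    (h : lexPos v) : lexPos (fun i : Fin k => v i.succ) := by
  obtain ⟨j, hj, hz⟩ := h
  have hjne : j ≠ 0 := by rintro rfl; rw [h0] at hj; exact lt_irrefl _ hj
  obtain ⟨j', rfl⟩ := Fin.eq_succ_of_ne_zero hjne
  exact ⟨j', hj, fun i hi => hz i.succ (Fin.succ_lt_succ_iff.mpr hi)⟩


lemma dp_scaled {n : ℕ} {a : Fin n → ℝ} (ha : a ≠ 0) (c : ℝ) :
    a ⬝ᵥ ((c / (a ⬝ᵥ a)) • a) = c := by
  have haa : a ⬝ᵥ a ≠ 0 := ne_of_gt (dp_self_pos ha)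
  rw [dotProduct_smul, smul_eq_mul]
  field_simp

lemma farkas {n : ℕ} {a b : Fin n → ℝ} {α β : ℝ} (ha : a ≠ 0) (hb : b ≠ 0)
    (h : ∀ x, a ⬝ᵥ x < α → b ⬝ᵥ x ≤ β) :
    ∃ μ : ℝ, 0 < μ ∧ b = μ • a ∧ μ * α ≤ β := by
  have haa : 0 < a ⬝ᵥ a := dp_self_pos ha
  -- closure version
  have hcl : ∀ x, a ⬝ᵥ x ≤ α → b ⬝ᵥ x ≤ β := by
    intro x hx
    by_contra hbx
    push_neg at hbx
    set d : ℝ := b ⬝ᵥ a with hd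
    set t : ℝ := (b ⬝ᵥ x - β) / (2 * (|d| + 1)) with ht
    have habs : 0 ≤ |d| := abs_nonneg d
    have htpos : 0 < t := by
      apply div_pos (by linarith) (by linarith)
    have h1 : a ⬝ᵥ (x - t • a) < α := by
      rw [dotProduct_sub, dotProduct_smul, smul_eq_mul]
      nlinarith
    have h2 := h _ h1
    rw [dotProduct_sub, dotProduct_smul, smul_eq_mul, ← hd] at h2
    have hda : d ≤ |d| := le_abs_self d
    have : t * d ≤ t * (|d| + 1) := by nlinarith
    have : t * (|d| + 1) = (b ⬝ᵥ x - β) / 2 := by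
      rw [ht]; field_simp
    nlinarith
  have hker : ∀ z, a ⬝ᵥ z = 0 → b ⬝ᵥ z = 0 := by
    intro z hz
    by_contra hbz
    have key : ∀ lam : ℝ, b ⬝ᵥ ((α / (a ⬝ᵥ a)) • a) + lam * (b ⬝ᵥ z) ≤ β := by
      intro lam
      have h1 : a ⬝ᵥ ((α / (a ⬝ᵥ a)) • a + lam • z) ≤ α := by
        rw [dotProduct_add, dp_scaled ha, dotProduct_smul, smul_eq_mul, hz, mul_zero, add_zero]
      have h2 := hcl _ h1
      have h3 : b ⬝ᵥ (lam • z) = lam * (b ⬝ᵥ z) := by rw [dotProduct_smul, smul_eq_mul]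
      rw [dotProduct_add, h3] at h2
      exact h2
    have k0 := key ((β + 1 - b ⬝ᵥ ((α / (a ⬝ᵥ a)) • a)) / (b ⬝ᵥ z))
    rw [div_mul_cancel₀ _ hbz] at k0
    linarith
  have hspan := span_of_ker ha hker
  set μ : ℝ := (b ⬝ᵥ a) / (a ⬝ᵥ a) with hμ
  have hμne : μ ≠ 0 := by
    rintro h0
    rw [h0, zero_smul] at hspan
    exact hb hspan
  have hbx : ∀ x : Fin n → ℝ, b ⬝ᵥ x = μ * (a ⬝ᵥ x) := by
    intro x
    rw [hspan, smul_dotProduct, smul_eq_mul]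
  have hμαβ : μ * α ≤ β := by
    have := hcl ((α / (a ⬝ᵥ a)) • a) (le_of_eq (dp_scaled ha α))
    rwa [hbx, dp_scaled ha] at this
  have hμpos : 0 < μ := by
    rcases hμne.lt_or_gt with hneg | hpos
    · exfalso
      set c : ℝ := min α ((β + 1) / μ) with hc
      have h1 : a ⬝ᵥ ((c / (a ⬝ᵥ a)) • a) ≤ α := by
        rw [dp_scaled ha]; exact min_le_left _ _
      have h2 := hcl _ h1
      rw [hbx, dp_scaled ha] at h2
      have hcle : c ≤ (β + 1) / μ := min_le_right _ _
      have : μ * c ≥ μ * ((β + 1) / μ) := by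
        exact mul_le_mul_of_nonpos_left hcle (le_of_lt hneg)
      rw [mul_div_cancel₀ _ hμne] at this
      linarith
    · exact hpos
  exact ⟨μ, hμpos, hspan, hμαβ⟩


/-- dot product with `g` as a linear map -/
def dpl {n : ℕ} (g : Fin n → ℝ) : (Fin n → ℝ) →ₗ[ℝ] ℝ where
  toFun x := g ⬝ᵥ x
  map_add' x y := dotProduct_add g x y
  map_smul' c x := by simp

@[simp] lemma dpl_apply {n : ℕ} (g x : Fin n → ℝ) : dpl g x = g ⬝ᵥ x := rfl

lemma sum_dp {ι : Type*} [Fintype ι] {n : ℕ} (f : ι → Fin n → ℝ) (w : Fin n → ℝ) :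
    (∑ i, f i) ⬝ᵥ w = ∑ i, f i ⬝ᵥ w := by
  simp only [dotProduct, Finset.sum_apply, Finset.sum_mul]
  exact Finset.sum_comm

lemma indep_sub {m n nk : ℕ} {P : Matrix (Fin (m+1)) (Fin n) ℝ}
    (hP : LinearIndependent ℝ P)
    {a : Fin n → ℝ} {c0 : ℝ} (hc0 : c0 ≠ 0) (hP0 : P 0 = c0 • a)
    {B : Matrix (Fin n) (Fin nk) ℝ}
    (hmul : ∀ g : Fin n → ℝ, (∀ j, g ⬝ᵥ (fun i => B i j) = 0) → ∃ c : ℝ, g = c • a) :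
    LinearIndependent ℝ (P.submatrix Fin.succ id * B) := by
  refine Fintype.linearIndependent_iff.mpr ?_
  intro d hd
  set g : Fin n → ℝ := ∑ i, d i • P i.succ with hg
  have hgcol : ∀ j, g ⬝ᵥ (fun i => B i j) = 0 := by
    intro j
    have := congrFun hd j
    simp only [Finset.sum_apply, Pi.smul_apply, Pi.zero_apply, smul_eq_mul] at this
    rw [hg, sum_dp]
    simp only [smul_dotProduct, smul_eq_mul]
    rw [← this]
    apply Finset.sum_congr rfl
    intro i _
    congr 1
  obtain ⟨e, hge⟩ := hmul g hgcol
  have hsum : ∑ i, (Fin.cons (-(e/c0)) d : Fin (m+1) → ℝ) i • P i = 0 := by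
    rw [Fin.sum_univ_succ]
    simp only [Fin.cons_zero, Fin.cons_succ]
    rw [hP0, ← hg, hge, smul_smul]
    rw [neg_mul, div_mul_cancel₀ _ hc0, neg_smul, neg_add_eq_zero]
  have hall := Fintype.linearIndependent_iff.mp hP _ hsum
  intro i
  have := hall i.succ
  rwa [Fin.cons_succ] at this

lemma rowrel {m n k nk : ℕ} (P₁ P₂ : Matrix (Fin (m+1)) (Fin n) ℝ) (a : Fin n → ℝ)
    (B : Matrix (Fin n) (Fin nk) ℝ)
    (hmul : ∀ g : Fin n → ℝ, (∀ j, g ⬝ᵥ (fun i => B i j) = 0) → ∃ c : ℝ, g = c • a)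
    (σ : Fin k → Fin m) (M' : Matrix (Fin k) (Fin k) ℝ)
    (hP : ∀ i j, (P₁.submatrix Fin.succ id * B) (σ i) j
      = ∑ t, M' i t * (P₂.submatrix Fin.succ id * B) (σ t) j) :
    ∃ c : Fin k → ℝ, ∀ i, P₁ (σ i).succ = c i • a + ∑ t, M' i t • P₂ (σ t).succ := by
  have key : ∀ i : Fin k, ∃ c : ℝ,
      P₁ (σ i).succ - ∑ t, M' i t • P₂ (σ t).succ = c • a := by
    intro i
    apply hmul
    intro j
    rw [sub_dotProduct, sum_dp]
    have h1 : P₁ (σ i).succ ⬝ᵥ (fun t => B t j) = (P₁.submatrix Fin.succ id * B) (σ i) j := by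
      simp [Matrix.mul_apply, dotProduct]
    have h2 : ∀ t : Fin k, (M' i t • P₂ (σ t).succ) ⬝ᵥ (fun s => B s j)
        = M' i t * (P₂.submatrix Fin.succ id * B) (σ t) j := by
      intro t
      rw [smul_dotProduct, smul_eq_mul]
      congr 1
    rw [h1, hP i j, Finset.sum_congr rfl (fun t _ => h2 t)]
    exact sub_self _
  choose c hc using key
  exact ⟨c, fun i => by
    have := sub_eq_iff_eq_add.mp (hc i)
    rw [this, add_comm]⟩

set_option maxHeartbeats 3000000 in
lemma aux : ∀ (m n : ℕ) (P₁ P₂ : Matrix (Fin m) (Fin n) ℝ) (q₁ q₂ : Fin m → ℝ),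
    LinearIndependent ℝ P₁ → LinearIndependent ℝ P₂ →
    (∀ x : Fin n → ℝ, lexPos (q₁ - P₁ *ᵥ x) →
      (P₂ *ᵥ x = q₂ ∨ lexPos (q₂ - P₂ *ᵥ x))) →
    (∃ M : Matrix (Fin m) (Fin m) ℝ,
      (∀ i j : Fin m, i < j → M i j = 0) ∧ (∀ i : Fin m, 0 < M i i) ∧
      P₁ = M * P₂ ∧ q₁ = M *ᵥ q₂) ∨
    (∃ (ℓ : ℕ) (hℓ₁ : 1 ≤ ℓ) (hℓm : ℓ ≤ m) (M : Matrix (Fin ℓ) (Fin ℓ) ℝ),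
      (∀ i j : Fin ℓ, i < j → M i j = 0) ∧ (∀ i : Fin ℓ, 0 < M i i) ∧
      P₁.submatrix (Fin.castLE hℓm) id = M * P₂.submatrix (Fin.castLE hℓm) id ∧
      lexPos (M *ᵥ (fun i : Fin ℓ => q₂ (Fin.castLE hℓm i)) -
        (fun i : Fin ℓ => q₁ (Fin.castLE hℓm i)))) := by
  intro m
  induction m with
  | zero =>
    intro n P₁ P₂ q₁ q₂ _ _ _
    left
    refine ⟨1, fun i => i.elim0, fun i => i.elim0, ?_, ?_⟩
    · ext i j; exact i.elim0
    · funext i; exact i.elim0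
  | succ m ih =>
    intro n P₁ P₂ q₁ q₂ hrank₁ hrank₂ himp
    set a : Fin n → ℝ := P₁ 0 with haa
    set b : Fin n → ℝ := P₂ 0 with hbb
    have ha : a ≠ 0 := hrank₁.ne_zero 0
    have hb : b ≠ 0 := hrank₂.ne_zero 0
    -- Step 2: half-space inclusion
    have step2 : ∀ x, a ⬝ᵥ x < q₁ 0 → b ⬝ᵥ x ≤ q₂ 0 := by
      intro x hx
      have he0 : (q₁ - P₁ *ᵥ x) 0 = q₁ 0 - a ⬝ᵥ x := rfl
      have hl : lexPos (q₁ - P₁ *ᵥ x) := by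
        refine ⟨0, ?_, fun j hj => absurd hj (Fin.not_lt_zero j)⟩
        rw [he0]; linarith
      rcases himp x hl with he | ⟨k, hk, hz⟩
      · have : (P₂ *ᵥ x) 0 = q₂ 0 := congrFun he 0
        have : b ⬝ᵥ x = q₂ 0 := this
        linarith
      · rcases eq_or_lt_of_le (Fin.zero_le k) with h0 | h0
        · rw [← h0] at hk
          have : (q₂ - P₂ *ᵥ x) 0 = q₂ 0 - b ⬝ᵥ x := rfl
          rw [this] at hk; linarith
        · have := hz 0 h0
          have h2 : q₂ 0 - b ⬝ᵥ x = 0 := this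
          linarith
    obtain ⟨μ, hμpos, hba, hμq⟩ := farkas ha hb step2
    rcases eq_or_lt_of_le hμq with heq | hlt
    · -- boundary case: recurse
      have hsurj : Function.Surjective (dpl a) := fun cc =>
        ⟨(cc / (a ⬝ᵥ a)) • a, dp_scaled ha cc⟩
      have hdim : Module.finrank ℝ (LinearMap.ker (dpl a)) = n - 1 := by
        have h1 := LinearMap.finrank_range_add_finrank_ker (dpl a)
        rw [LinearMap.range_eq_top.mpr hsurj] at h1
        have h2 : Module.finrank ℝ (⊤ : Submodule ℝ ℝ) = 1 := by simp
        have h3 : Module.finrank ℝ (Fin n → ℝ) = n := by simp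
        omega
      set K := LinearMap.ker (dpl a) with hK
      set bK : Module.Basis (Fin (n-1)) ℝ K := (Module.finBasis ℝ K).reindex (finCongr hdim) with hbK
      set B : Matrix (Fin n) (Fin (n-1)) ℝ := Matrix.of (fun i j => (bK j : Fin n → ℝ) i) with hB
      have hcol : ∀ j, (fun i => B i j) = ((bK j : Fin n → ℝ)) := fun j => rfl
      have hmul : ∀ g : Fin n → ℝ, (∀ j, g ⬝ᵥ (fun i => B i j) = 0) → ∃ cc : ℝ, g = cc • a := by
        intro g hg
        refine ⟨_, span_of_ker ha ?_⟩
        intro z hz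
        have hzK : z ∈ K := LinearMap.mem_ker.mpr hz
        have hcomp : (dpl g).comp K.subtype = 0 := by
          apply Module.Basis.ext bK
          intro j
          have := hg j
          rw [hcol j] at this
          simpa using this
        have := congrArg (fun f => f (⟨z, hzK⟩ : K)) hcomp
        simpa using this
      have haB : ∀ y : Fin (n-1) → ℝ, a ⬝ᵥ (B *ᵥ y) = 0 := by
        intro y
        rw [Matrix.dotProduct_mulVec]
        have hvB : Matrix.vecMul a B = 0 := by
          funext j
          show a ⬝ᵥ (fun i => B i j) = 0
          rw [hcol j]
          exact LinearMap.mem_ker.mp (bK j).2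
        rw [hvB]
        exact zero_dotProduct y
      have hbB : ∀ y, b ⬝ᵥ (B *ᵥ y) = 0 := by
        intro y
        rw [hba, smul_dotProduct, haB, smul_zero]
      set xb : Fin n → ℝ := (q₁ 0 / (a ⬝ᵥ a)) • a with hxb
      have hax : a ⬝ᵥ xb = q₁ 0 := dp_scaled ha _
      have hbx : b ⬝ᵥ xb = q₂ 0 := by
        rw [hba, smul_dotProduct, hax, smul_eq_mul, heq]
      set A₁ := P₁.submatrix Fin.succ id with hA₁
      set A₂ := P₂.submatrix Fin.succ id with hA₂
      set q₁' : Fin m → ℝ := fun i => q₁ i.succ - P₁ i.succ ⬝ᵥ xb with hq₁'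
      set q₂' : Fin m → ℝ := fun i => q₂ i.succ - P₂ i.succ ⬝ᵥ xb with hq₂'
      have hI1 : LinearIndependent ℝ (A₁ * B) :=
        indep_sub hrank₁ one_ne_zero (by rw [one_smul]) hmul
      have hI2 : LinearIndependent ℝ (A₂ * B) :=
        indep_sub hrank₂ (ne_of_gt hμpos) hba hmul
      have hmv1 : ∀ (y : Fin (n-1) → ℝ) (i : Fin m),
          ((A₁ * B) *ᵥ y) i = P₁ i.succ ⬝ᵥ (B *ᵥ y) := by
        intro y i
        rw [← Matrix.mulVec_mulVec]
        rfl
      have hmv2 : ∀ (y : Fin (n-1) → ℝ) (i : Fin m),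
          ((A₂ * B) *ᵥ y) i = P₂ i.succ ⬝ᵥ (B *ᵥ y) := by
        intro y i
        rw [← Matrix.mulVec_mulVec]
        rfl
      have himp' : ∀ y : Fin (n-1) → ℝ, lexPos (q₁' - (A₁ * B) *ᵥ y) →
          ((A₂ * B) *ᵥ y = q₂' ∨ lexPos (q₂' - (A₂ * B) *ᵥ y)) := by
        intro y hy
        set x : Fin n → ℝ := xb + B *ᵥ y with hx
        have hP₁0 : (P₁ *ᵥ x) 0 = q₁ 0 := by
          show a ⬝ᵥ (xb + B *ᵥ y) = q₁ 0
          rw [dotProduct_add, hax, haB, add_zero]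
        have hP₁s : ∀ i : Fin m, (P₁ *ᵥ x) i.succ = P₁ i.succ ⬝ᵥ xb + ((A₁ * B) *ᵥ y) i := by
          intro i
          show P₁ i.succ ⬝ᵥ (xb + B *ᵥ y) = _
          rw [dotProduct_add, hmv1]
        have hP₂0 : (P₂ *ᵥ x) 0 = q₂ 0 := by
          show b ⬝ᵥ (xb + B *ᵥ y) = q₂ 0
          rw [dotProduct_add, hbx, hbB, add_zero]
        have hP₂s : ∀ i : Fin m, (P₂ *ᵥ x) i.succ = P₂ i.succ ⬝ᵥ xb + ((A₂ * B) *ᵥ y) i := by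
          intro i
          show P₂ i.succ ⬝ᵥ (xb + B *ᵥ y) = _
          rw [dotProduct_add, hmv2]
        have hsub1 : (fun i : Fin m => (q₁ - P₁ *ᵥ x) i.succ) = q₁' - (A₁ * B) *ᵥ y := by
          funext i
          show q₁ i.succ - (P₁ *ᵥ x) i.succ = q₁' i - ((A₁ * B) *ᵥ y) i
          rw [hP₁s i, hq₁']
          ring
        have hx0 : (q₁ - P₁ *ᵥ x) 0 = 0 := by
          show q₁ 0 - (P₁ *ᵥ x) 0 = 0
          rw [hP₁0, sub_self]
        have hlx : lexPos (q₁ - P₁ *ᵥ x) := by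
          apply lexPos_succ hx0
          rw [hsub1]
          exact hy
        rcases himp x hlx with he | hlp
        · left
          funext i
          have hei := congrFun he i.succ
          rw [hP₂s i] at hei
          show ((A₂ * B) *ᵥ y) i = q₂ i.succ - P₂ i.succ ⬝ᵥ xb
          linarith [hei]
        · right
          have h20 : (q₂ - P₂ *ᵥ x) 0 = 0 := by
            show q₂ 0 - (P₂ *ᵥ x) 0 = 0
            rw [hP₂0, sub_self]
          have := lexPos_of_succ h20 hlp
          have hsub2 : (fun i : Fin m => (q₂ - P₂ *ᵥ x) i.succ) = q₂' - (A₂ * B) *ᵥ y := by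
            funext i
            show q₂ i.succ - (P₂ *ᵥ x) i.succ = q₂' i - ((A₂ * B) *ᵥ y) i
            rw [hP₂s i, hq₂']
            ring
          rwa [hsub2] at this
      have hq10 : q₁ 0 = μ⁻¹ * q₂ 0 := by
        rw [← heq, inv_mul_cancel_left₀ (ne_of_gt hμpos)]
      have hbja : ∀ j, P₂ 0 j = μ * P₁ 0 j := by
        intro j
        have := congrFun hba j
        simpa using this
      rcases ih (n-1) (A₁ * B) (A₂ * B) q₁' q₂' hI1 hI2 himp' with
        ⟨M', hLT, hD, hPm, hqm⟩ | ⟨ℓ', hℓ1, hℓm, M', hLT, hD, hPm, hqm⟩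
      · -- full lift
        obtain ⟨c, hc⟩ := rowrel P₁ P₂ a B hmul (fun i => i) M' (by
          intro i j
          have := congrFun (congrFun hPm i) j
          rwa [Matrix.mul_apply] at this)
        have hdot : ∀ i : Fin m, P₁ i.succ ⬝ᵥ xb
            = c i * q₁ 0 + ∑ t, M' i t * (P₂ t.succ ⬝ᵥ xb) := by
          intro i
          have h := congrArg (fun v => v ⬝ᵥ xb) (hc i)
          simp only [add_dotProduct, smul_dotProduct, smul_eq_mul, sum_dp] at h
          rw [hax] at h
          exact h
        set M : Matrix (Fin (m+1)) (Fin (m+1)) ℝ :=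
          Matrix.of (Fin.cons (Fin.cons μ⁻¹ (fun _ => 0))
            (fun i => Fin.cons (c i * μ⁻¹) (fun t => M' i t))) with hM
        have hM00 : M 0 0 = μ⁻¹ := rfl
        have hM0s : ∀ t : Fin m, M 0 t.succ = 0 := fun t => by
          simp [hM, Fin.cons_zero, Fin.cons_succ]
        have hMs0 : ∀ i : Fin m, M i.succ 0 = c i * μ⁻¹ := fun i => by
          simp [hM, Fin.cons_zero, Fin.cons_succ]
        have hMss : ∀ i t : Fin m, M i.succ t.succ = M' i t := fun i t => by
          simp [hM, Fin.cons_succ]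
        left
        refine ⟨M, ?_, ?_, ?_, ?_⟩
        · intro i j hij
          induction i using Fin.cases with
          | zero =>
            obtain ⟨j', rfl⟩ := Fin.eq_succ_of_ne_zero (Fin.pos_iff_ne_zero.mp hij)
            exact hM0s j'
          | succ i =>
            have hjne : j ≠ 0 := by
              rintro rfl
              exact absurd hij (Fin.not_lt_zero _)
            obtain ⟨j', rfl⟩ := Fin.eq_succ_of_ne_zero hjne
            rw [hMss]
            exact hLT i j' (Fin.succ_lt_succ_iff.mp hij)
        · intro i
          induction i using Fin.cases with
          | zero => rw [hM00]; exact inv_pos.mpr hμpos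
          | succ i => rw [hMss]; exact hD i
        · ext i j
          induction i using Fin.cases with
          | zero =>
            rw [Matrix.mul_apply, Fin.sum_univ_succ, hM00]
            rw [Finset.sum_congr rfl (fun t _ => by rw [hM0s t, zero_mul]),
              Finset.sum_const_zero, add_zero]
            rw [hbja j, inv_mul_cancel_left₀ (ne_of_gt hμpos)]
          | succ i =>
            rw [Matrix.mul_apply, Fin.sum_univ_succ, hMs0]
            rw [Finset.sum_congr rfl (fun t _ => by rw [hMss i t])]
            have hrow := congrFun (hc i) j
            simp only [Pi.add_apply, Pi.smul_apply, Finset.sum_apply, smul_eq_mul] at hrow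
            rw [hrow, hbja j]
            have hμne : μ ≠ 0 := ne_of_gt hμpos
            have haj : a j = P₁ 0 j := congrFun haa j
            have hmm : c i * μ⁻¹ * (μ * P₁ 0 j) = c i * a j := by
              rw [haj]; field_simp
            linarith [hmm]
        · funext i
          induction i using Fin.cases with
          | zero =>
            rw [show (M *ᵥ q₂) 0 = ∑ k, M 0 k * q₂ k from rfl, Fin.sum_univ_succ, hM00]
            rw [Finset.sum_congr rfl (fun t _ => by rw [hM0s t, zero_mul]),
              Finset.sum_const_zero, add_zero]
            exact hq10
          | succ i =>
            rw [show (M *ᵥ q₂) i.succ = ∑ k, M i.succ k * q₂ k from rfl, Fin.sum_univ_succ, hMs0]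
            rw [Finset.sum_congr rfl (fun t _ => by rw [hMss i t])]
            have hqi := congrFun hqm i
            rw [show (M' *ᵥ q₂') i = ∑ t, M' i t * q₂' t from rfl] at hqi
            rw [hq₁'] at hqi
            have hsplit : ∑ t, M' i t * q₂' t
                = (∑ t, M' i t * q₂ t.succ) - ∑ t, M' i t * (P₂ t.succ ⬝ᵥ xb) := by
              rw [← Finset.sum_sub_distrib]
              apply Finset.sum_congr rfl
              intro t _
              rw [hq₂']
              ring
            rw [hsplit] at hqi
            have hqi2 : q₁ i.succ - P₁ i.succ ⬝ᵥ xb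
                = (∑ t, M' i t * q₂ t.succ) - ∑ t, M' i t * (P₂ t.succ ⬝ᵥ xb) := hqi
            have hcq : c i * q₁ 0 = c i * μ⁻¹ * q₂ 0 := by rw [hq10]; ring
            have hdi := hdot i
            linarith [hqi2, hdi, hcq]
      · -- partial lift
        have hℓm1 : ℓ' + 1 ≤ m + 1 := Nat.succ_le_succ hℓm
        obtain ⟨c, hc⟩ := rowrel P₁ P₂ a B hmul (fun i => Fin.castLE hℓm i) M' (by
          intro i j
          have := congrFun (congrFun hPm i) j
          rw [Matrix.mul_apply] at this
          simpa [Matrix.submatrix_apply] using this)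
        have hdot : ∀ i : Fin ℓ', P₁ (Fin.castLE hℓm i).succ ⬝ᵥ xb
            = c i * q₁ 0 + ∑ t, M' i t * (P₂ (Fin.castLE hℓm t).succ ⬝ᵥ xb) := by
          intro i
          have h := congrArg (fun v => v ⬝ᵥ xb) (hc i)
          simp only [add_dotProduct, smul_dotProduct, smul_eq_mul, sum_dp] at h
          rw [hax] at h
          exact h
        set M : Matrix (Fin (ℓ'+1)) (Fin (ℓ'+1)) ℝ :=
          Matrix.of (Fin.cons (Fin.cons μ⁻¹ (fun _ => 0))
            (fun i => Fin.cons (c i * μ⁻¹) (fun t => M' i t))) with hM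
        have hM00 : M 0 0 = μ⁻¹ := rfl
        have hM0s : ∀ t : Fin ℓ', M 0 t.succ = 0 := fun t => by
          simp [hM, Fin.cons_zero, Fin.cons_succ]
        have hMs0 : ∀ i : Fin ℓ', M i.succ 0 = c i * μ⁻¹ := fun i => by
          simp [hM, Fin.cons_zero, Fin.cons_succ]
        have hMss : ∀ i t : Fin ℓ', M i.succ t.succ = M' i t := fun i t => by
          simp [hM, Fin.cons_succ]
        have hcs0 : Fin.castLE hℓm1 (0 : Fin (ℓ'+1)) = 0 := rfl
        have hcss : ∀ t : Fin ℓ', Fin.castLE hℓm1 t.succ = (Fin.castLE hℓm t).succ :=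
          fun t => rfl
        right
        refine ⟨ℓ' + 1, Nat.succ_le_succ (Nat.zero_le _), hℓm1, M, ?_, ?_, ?_, ?_⟩
        · intro i j hij
          induction i using Fin.cases with
          | zero =>
            obtain ⟨j', rfl⟩ := Fin.eq_succ_of_ne_zero (Fin.pos_iff_ne_zero.mp hij)
            exact hM0s j'
          | succ i =>
            have hjne : j ≠ 0 := by
              rintro rfl
              exact absurd hij (Fin.not_lt_zero _)
            obtain ⟨j', rfl⟩ := Fin.eq_succ_of_ne_zero hjne
            rw [hMss]
            exact hLT i j' (Fin.succ_lt_succ_iff.mp hij)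
        · intro i
          induction i using Fin.cases with
          | zero => rw [hM00]; exact inv_pos.mpr hμpos
          | succ i => rw [hMss]; exact hD i
        · ext i j
          induction i using Fin.cases with
          | zero =>
            simp only [Matrix.submatrix_apply, id_eq, Matrix.mul_apply]
            rw [Fin.sum_univ_succ, hM00]
            rw [Finset.sum_congr rfl (fun t _ => by rw [hM0s t, zero_mul]),
              Finset.sum_const_zero, add_zero, hcs0]
            rw [hbja j]
            rw [inv_mul_cancel_left₀ (ne_of_gt hμpos)]
          | succ i =>
            simp only [Matrix.submatrix_apply, id_eq, Matrix.mul_apply]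
            rw [Fin.sum_univ_succ, hMs0, hcs0, hcss i]
            rw [Finset.sum_congr rfl (fun t _ => by rw [hMss i t, hcss t])]
            have hrow := congrFun (hc i) j
            simp only [Pi.add_apply, Pi.smul_apply, Finset.sum_apply, smul_eq_mul] at hrow
            rw [hrow, hbja j]
            have hμne : μ ≠ 0 := ne_of_gt hμpos
            have haj : a j = P₁ 0 j := congrFun haa j
            have hmm : c i * μ⁻¹ * (μ * P₁ 0 j) = c i * a j := by
              rw [haj]; field_simp
            linarith [hmm]
        · apply lexPos_succ
          · show (∑ k, M 0 k * q₂ (Fin.castLE hℓm1 k)) - q₁ (Fin.castLE hℓm1 0) = 0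
            rw [Fin.sum_univ_succ, hM00]
            rw [Finset.sum_congr rfl (fun t _ => by rw [hM0s t, zero_mul]),
              Finset.sum_const_zero, add_zero, hcs0]
            show μ⁻¹ * q₂ 0 - q₁ 0 = 0
            rw [hq10, sub_self]
          · have htail : (fun i : Fin ℓ' =>
                ((M *ᵥ fun i => q₂ (Fin.castLE hℓm1 i)) - fun i => q₁ (Fin.castLE hℓm1 i)) i.succ)
                = (M' *ᵥ fun i => q₂' (Fin.castLE hℓm i)) - fun i => q₁' (Fin.castLE hℓm i) := by
              funext i
              show (∑ k, M i.succ k * q₂ (Fin.castLE hℓm1 k)) - q₁ (Fin.castLE hℓm1 i.succ)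
                = (∑ t, M' i t * q₂' (Fin.castLE hℓm t)) - q₁' (Fin.castLE hℓm i)
              rw [Fin.sum_univ_succ, hMs0, hcs0, hcss i]
              rw [Finset.sum_congr rfl (fun t _ => by rw [hMss i t, hcss t])]
              have hsplit : ∑ t, M' i t * q₂' (Fin.castLE hℓm t)
                  = (∑ t, M' i t * q₂ (Fin.castLE hℓm t).succ)
                    - ∑ t, M' i t * (P₂ (Fin.castLE hℓm t).succ ⬝ᵥ xb) := by
                rw [← Finset.sum_sub_distrib]
                apply Finset.sum_congr rfl
                intro t _
                rw [hq₂']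
                ring
              rw [hsplit, hq₁']
              have hcq : c i * q₁ 0 = c i * μ⁻¹ * q₂ 0 := by rw [hq10]; ring
              have hdi := hdot i
              show c i * μ⁻¹ * q₂ 0 + (∑ t, M' i t * q₂ (Fin.castLE hℓm t).succ)
                  - q₁ (Fin.castLE hℓm i).succ = _
              linarith [hdi, hcq]
            rw [htail]
            exact hqm
    · -- strict case: ℓ = 1
      right
      refine ⟨1, le_refl 1, Nat.succ_le_succ (Nat.zero_le m),
        Matrix.of (fun _ _ => μ⁻¹), ?_, ?_, ?_, ?_⟩
      · intro i j hij
        rw [Subsingleton.elim i j] at hij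
        exact absurd hij (lt_irrefl j)
      · intro i
        exact inv_pos.mpr hμpos
      · ext i j
        fin_cases i
        simp only [Matrix.submatrix_apply, Matrix.mul_apply, Fin.sum_univ_one, Matrix.of_apply,
          id_eq]
        have hcast : Fin.castLE (Nat.succ_le_succ (Nat.zero_le m)) (0 : Fin 1) = 0 := rfl
        rw [hcast]
        have hbj : b j = μ * a j := by rw [hba]; rfl
        have : P₂ 0 j = μ * P₁ 0 j := hbj
        rw [this, inv_mul_cancel_left₀ (ne_of_gt hμpos)]
        rfl
      · refine ⟨0, ?_, fun j hj => absurd hj (Fin.not_lt_zero j)⟩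
        have hcast : Fin.castLE (Nat.succ_le_succ (Nat.zero_le m)) (0 : Fin 1) = 0 := rfl
        show 0 < (Matrix.of (fun _ _ => μ⁻¹) *ᵥ _ - _) 0
        simp only [Pi.sub_apply, Matrix.mulVec, dotProduct, Fin.sum_univ_one, Matrix.of_apply,
          hcast]
        rw [sub_pos, show μ⁻¹ * q₂ 0 = q₂ 0 / μ by ring]
        rw [lt_div_iff₀ hμpos, mul_comm]
        exact hlt
end LexAux

theorem lex_implication_necessary_conditions (m n : ℕ)
    (P₁ P₂ : Matrix (Fin m) (Fin n) ℝ) (q₁ q₂ : Fin m → ℝ)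
    (hrank₁ : LinearIndependent ℝ P₁) (hrank₂ : LinearIndependent ℝ P₂)
    (himp : ∀ x : Fin n → ℝ, lexPos (q₁ - P₁ *ᵥ x) →
      (P₂ *ᵥ x = q₂ ∨ lexPos (q₂ - P₂ *ᵥ x))) :
    (∃ M : Matrix (Fin m) (Fin m) ℝ,
      (∀ i j : Fin m, i < j → M i j = 0) ∧ (∀ i : Fin m, 0 < M i i) ∧
      P₁ = M * P₂ ∧ q₁ = M *ᵥ q₂) ∨
    (∃ (ℓ : ℕ) (hℓ₁ : 1 ≤ ℓ) (hℓm : ℓ ≤ m) (M : Matrix (Fin ℓ) (Fin ℓ) ℝ),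
      (∀ i j : Fin ℓ, i < j → M i j = 0) ∧ (∀ i : Fin ℓ, 0 < M i i) ∧
      P₁.submatrix (Fin.castLE hℓm) id = M * P₂.submatrix (Fin.castLE hℓm) id ∧
      lexPos (M *ᵥ (fun i : Fin ℓ => q₂ (Fin.castLE hℓm i)) -
        (fun i : Fin ℓ => q₁ (Fin.castLE hℓm i)))) :=
  LexAux.aux m n P₁ P₂ q₁ q₂ hrank₁ hrank₂ himp
end

section
/- Define 𝔾₀ = 𝕀₀ = {I}, 𝔾ₖ = {AᵢG' : G' ∈ 𝔾ₖ₋₁, i ∈ {1,2}}, and ℍₖ = {A(λ)H' : λ ∈ [0,1], H' ∈ ℍₖ₋₁} where A(λ) = λA₁ + (1−λ)A₂. For G = A_{i_k}⋯A_{i_1} ∈ 𝔾ₖ set e_G = cᵀA_{i_k}⋯A_{i_2}e_{i_1}, and analogously e_H for H ∈ ℍₖ with e(λ) = λe₁ + (1−λ)e₂ (with e_I = f). Let 𝒢ₖ = {(G, e_G) : G ∈ 𝔾ₖ} and ℋₖ = {(H, e_H) : H ∈ ℍₖ}. Then conv(ℋₖ) = conv(𝒢ₖ) for every k ≥ 0.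 -/
open Matrix

variable {n : ℕ}

/-- Auxiliary sets: `GAux A₁ A₂ e₁ e₂ j` is the set of pairs
`(A_{i_{j+1}}⋯A_{i_1}, A_{i_{j+1}}⋯A_{i_2} e_{i_1})` with each `iₗ ∈ {1,2}`. -/
def GAux (A₁ A₂ : Matrix (Fin n) (Fin n) ℝ) (e₁ e₂ : Fin n → ℝ) :
    ℕ → Set (Matrix (Fin n) (Fin n) ℝ × (Fin n → ℝ))
  | 0 => {(A₁, e₁), (A₂, e₂)}
  | j + 1 => {p | ∃ q ∈ GAux A₁ A₂ e₁ e₂ j,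
      p = (A₁ * q.1, A₁ *ᵥ q.2) ∨ p = (A₂ * q.1, A₂ *ᵥ q.2)}

/-- `𝒢ₖ = {(G, e_G) : G ∈ 𝔾ₖ}` with `e_I = f` and `e_G = cᵀA_{i_k}⋯A_{i_2}e_{i_1}`. -/
def GPairs (A₁ A₂ : Matrix (Fin n) (Fin n) ℝ) (e₁ e₂ c : Fin n → ℝ) (f : ℝ) :
    ℕ → Set (Matrix (Fin n) (Fin n) ℝ × ℝ)
  | 0 => {(1, f)}
  | j + 1 => {p | ∃ q ∈ GAux A₁ A₂ e₁ e₂ j, p = (q.1, c ⬝ᵥ q.2)}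

/-- Auxiliary sets for products of convex combinations `A(λ) = λA₁ + (1-λ)A₂`,
`e(λ) = λe₁ + (1-λ)e₂`. -/
def HAux (A₁ A₂ : Matrix (Fin n) (Fin n) ℝ) (e₁ e₂ : Fin n → ℝ) :
    ℕ → Set (Matrix (Fin n) (Fin n) ℝ × (Fin n → ℝ))
  | 0 => {p | ∃ l ∈ Set.Icc (0:ℝ) 1,
      p = (l • A₁ + (1 - l) • A₂, l • e₁ + (1 - l) • e₂)}
  | j + 1 => {p | ∃ q ∈ HAux A₁ A₂ e₁ e₂ j, ∃ l ∈ Set.Icc (0:ℝ) 1,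
      p = ((l • A₁ + (1 - l) • A₂) * q.1, (l • A₁ + (1 - l) • A₂) *ᵥ q.2)}

/-- `ℋₖ = {(H, e_H) : H ∈ ℍₖ}`. -/
def HPairs (A₁ A₂ : Matrix (Fin n) (Fin n) ℝ) (e₁ e₂ c : Fin n → ℝ) (f : ℝ) :
    ℕ → Set (Matrix (Fin n) (Fin n) ℝ × ℝ)
  | 0 => {(1, f)}
  | j + 1 => {p | ∃ q ∈ HAux A₁ A₂ e₁ e₂ j, p = (q.1, c ⬝ᵥ q.2)}

/-- The linear map `q ↦ (M * q.1, M *ᵥ q.2)`. -/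
noncomputable def Tmap (M : Matrix (Fin n) (Fin n) ℝ) :
    (Matrix (Fin n) (Fin n) ℝ × (Fin n → ℝ)) →ₗ[ℝ]
      (Matrix (Fin n) (Fin n) ℝ × (Fin n → ℝ)) :=
  (LinearMap.mulLeft ℝ M).prodMap M.mulVecLin

@[simp] lemma Tmap_apply (M : Matrix (Fin n) (Fin n) ℝ)
    (q : Matrix (Fin n) (Fin n) ℝ × (Fin n → ℝ)) :
    Tmap M q = (M * q.1, M *ᵥ q.2) := rfl

/-- The linear map `q ↦ (q.1, c ⬝ᵥ q.2)`. -/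
noncomputable def Lmap (c : Fin n → ℝ) :
    (Matrix (Fin n) (Fin n) ℝ × (Fin n → ℝ)) →ₗ[ℝ]
      (Matrix (Fin n) (Fin n) ℝ × ℝ) :=
  LinearMap.prodMap LinearMap.id
    { toFun := fun v => c ⬝ᵥ v
      map_add' := fun x y => dotProduct_add c x y
      map_smul' := fun r x => by simp }

@[simp] lemma Lmap_apply (c : Fin n → ℝ)
    (q : Matrix (Fin n) (Fin n) ℝ × (Fin n → ℝ)) :
    Lmap c q = (q.1, c ⬝ᵥ q.2) := rfl

lemma convexComb_pair (A₁ A₂ : Matrix (Fin n) (Fin n) ℝ) (e₁ e₂ : Fin n → ℝ) (l : ℝ) :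
    ((l • A₁ + (1 - l) • A₂, l • e₁ + (1 - l) • e₂) :
      Matrix (Fin n) (Fin n) ℝ × (Fin n → ℝ))
      = l • (A₁, e₁) + (1 - l) • (A₂, e₂) := by
  simp [Prod.ext_iff]

lemma GAux_succ_eq (A₁ A₂ : Matrix (Fin n) (Fin n) ℝ) (e₁ e₂ : Fin n → ℝ) (j : ℕ) :
    GAux A₁ A₂ e₁ e₂ (j + 1) =
      Tmap A₁ '' GAux A₁ A₂ e₁ e₂ j ∪ Tmap A₂ '' GAux A₁ A₂ e₁ e₂ j := by
  ext p
  simp only [GAux, Set.mem_setOf_eq, Set.mem_union, Set.mem_image, Tmap_apply]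
  constructor
  · rintro ⟨q, hq, h | h⟩
    · exact Or.inl ⟨q, hq, h.symm⟩
    · exact Or.inr ⟨q, hq, h.symm⟩
  · rintro (⟨q, hq, h⟩ | ⟨q, hq, h⟩)
    · exact ⟨q, hq, Or.inl h.symm⟩
    · exact ⟨q, hq, Or.inr h.symm⟩

lemma convexHull_HAux_eq (A₁ A₂ : Matrix (Fin n) (Fin n) ℝ) (e₁ e₂ : Fin n → ℝ) :
    ∀ j, convexHull ℝ (HAux A₁ A₂ e₁ e₂ j) = convexHull ℝ (GAux A₁ A₂ e₁ e₂ j)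
  | 0 => by
    have h0 : HAux A₁ A₂ e₁ e₂ 0 = segment ℝ ((A₁, e₁) :
        Matrix (Fin n) (Fin n) ℝ × (Fin n → ℝ)) (A₂, e₂) := by
      ext p
      simp only [HAux, Set.mem_setOf_eq, segment, Set.mem_Icc]
      constructor
      · rintro ⟨l, ⟨hl0, hl1⟩, rfl⟩
        exact ⟨l, 1 - l, hl0, by linarith, by ring, (convexComb_pair _ _ _ _ _).symm⟩
      · rintro ⟨a, b, ha, hb, hab, rfl⟩
        refine ⟨a, ⟨ha, by linarith⟩, ?_⟩
        rw [convexComb_pair]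
        have hb' : (1:ℝ) - a = b := by linarith
        rw [hb']
    have hg : (GAux A₁ A₂ e₁ e₂ 0 : Set _) = {(A₁, e₁), (A₂, e₂)} := rfl
    rw [h0, hg, convexHull_pair, (convex_segment _ _).convexHull_eq]
  | j + 1 => by
    have IH := convexHull_HAux_eq A₁ A₂ e₁ e₂ j
    -- H_{j+1} and the union T₁''H_j ∪ T₂''H_j have the same convex hull
    have key : convexHull ℝ (HAux A₁ A₂ e₁ e₂ (j + 1)) =
        convexHull ℝ (Tmap A₁ '' HAux A₁ A₂ e₁ e₂ j ∪ Tmap A₂ '' HAux A₁ A₂ e₁ e₂ j) := by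
      apply le_antisymm
      · apply convexHull_min _ (convex_convexHull ℝ _)
        rintro p ⟨q, hq, l, ⟨hl0, hl1⟩, rfl⟩
        have hp : ((l • A₁ + (1 - l) • A₂) * q.1, (l • A₁ + (1 - l) • A₂) *ᵥ q.2)
            = l • Tmap A₁ q + (1 - l) • Tmap A₂ q := by
          simp only [Tmap_apply, Prod.smul_mk, Prod.mk_add_mk, Prod.mk.injEq]
          constructor
          · rw [add_mul, smul_mul_assoc, smul_mul_assoc]
          · rw [add_mulVec, smul_mulVec, smul_mulVec]
        rw [hp]
        have h₁ : Tmap A₁ q ∈ convexHull ℝ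
            (Tmap A₁ '' HAux A₁ A₂ e₁ e₂ j ∪ Tmap A₂ '' HAux A₁ A₂ e₁ e₂ j) :=
          subset_convexHull ℝ _ (Or.inl ⟨q, hq, rfl⟩)
        have h₂ : Tmap A₂ q ∈ convexHull ℝ
            (Tmap A₁ '' HAux A₁ A₂ e₁ e₂ j ∪ Tmap A₂ '' HAux A₁ A₂ e₁ e₂ j) :=
          subset_convexHull ℝ _ (Or.inr ⟨q, hq, rfl⟩)
        exact (convex_convexHull ℝ _) h₁ h₂ hl0 (by linarith) (by ring)
      · apply convexHull_mono
        rintro p (⟨q, hq, rfl⟩ | ⟨q, hq, rfl⟩)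
        · exact ⟨q, hq, 1, ⟨zero_le_one, le_refl 1⟩, by simp⟩
        · exact ⟨q, hq, 0, ⟨le_refl 0, zero_le_one⟩, by simp⟩
    calc convexHull ℝ (HAux A₁ A₂ e₁ e₂ (j + 1))
        = convexHull ℝ (Tmap A₁ '' HAux A₁ A₂ e₁ e₂ j ∪ Tmap A₂ '' HAux A₁ A₂ e₁ e₂ j) := key
      _ = convexHull ℝ (convexHull ℝ (Tmap A₁ '' HAux A₁ A₂ e₁ e₂ j) ∪
            convexHull ℝ (Tmap A₂ '' HAux A₁ A₂ e₁ e₂ j)) := by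
          rw [convexHull_convexHull_union_left, convexHull_convexHull_union_right]
      _ = convexHull ℝ (convexHull ℝ (Tmap A₁ '' GAux A₁ A₂ e₁ e₂ j) ∪
            convexHull ℝ (Tmap A₂ '' GAux A₁ A₂ e₁ e₂ j)) := by
          rw [← LinearMap.image_convexHull, ← LinearMap.image_convexHull, IH,
            LinearMap.image_convexHull, LinearMap.image_convexHull]
      _ = convexHull ℝ (Tmap A₁ '' GAux A₁ A₂ e₁ e₂ j ∪ Tmap A₂ '' GAux A₁ A₂ e₁ e₂ j) := by
          rw [convexHull_convexHull_union_left, convexHull_convexHull_union_right]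
      _ = convexHull ℝ (GAux A₁ A₂ e₁ e₂ (j + 1)) := by rw [GAux_succ_eq]

theorem convexHull_HPairs_eq_convexHull_GPairs
    (A₁ A₂ : Matrix (Fin n) (Fin n) ℝ) (e₁ e₂ c : Fin n → ℝ) (f : ℝ) (k : ℕ) :
    convexHull ℝ (HPairs A₁ A₂ e₁ e₂ c f k) =
      convexHull ℝ (GPairs A₁ A₂ e₁ e₂ c f k) := by
  cases k with
  | zero => rfl
  | succ j =>
    have hH : HPairs A₁ A₂ e₁ e₂ c f (j + 1) = Lmap c '' HAux A₁ A₂ e₁ e₂ j := by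
      ext p
      simp only [HPairs, Set.mem_setOf_eq, Set.mem_image, Lmap_apply]
      constructor
      · rintro ⟨q, hq, rfl⟩; exact ⟨q, hq, rfl⟩
      · rintro ⟨q, hq, rfl⟩; exact ⟨q, hq, rfl⟩
    have hG : GPairs A₁ A₂ e₁ e₂ c f (j + 1) = Lmap c '' GAux A₁ A₂ e₁ e₂ j := by
      ext p
      simp only [GPairs, Set.mem_setOf_eq, Set.mem_image, Lmap_apply]
      constructor
      · rintro ⟨q, hq, rfl⟩; exact ⟨q, hq, rfl⟩
      · rintro ⟨q, hq, rfl⟩; exact ⟨q, hq, rfl⟩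
    rw [hH, hG, ← LinearMap.image_convexHull, ← LinearMap.image_convexHull,
      convexHull_HAux_eq]
end

section
/- Let x : [0, ε) → ℝⁿ be differentiable at t* ∈ [0, ε) with cᵀx(t*) + f = 0, and suppose cᵀA₁²x(t*) + cᵀA₁e₁ > 0 and cᵀA₂²x(t*) + cᵀA₂e₂ < 0. Define V₁(z) = (cᵀz+f)(cᵀA₁²z+cᵀA₁e₁) if cᵀz+f ≤ 0 and V₁(z) = (cᵀz+f)(cᵀA₂²z+cᵀA₂e₂) if cᵀz+f ≥ 0. If t ↦ V₁(x(t)) is differentiable at t*, then cᵀẋ(t*) = 0 and d/dt V₁(x(t))|_{t=t*} = 0. -/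
open Matrix Filter

theorem V1_derivative_vanishes (n : ℕ)
    (A₁ A₂ : Matrix (Fin n) (Fin n) ℝ) (e₁ e₂ c : Fin n → ℝ) (f : ℝ)
    (ε : ℝ) (hε : 0 < ε) (x : ℝ → Fin n → ℝ) (tstar : ℝ)
    (htstar : tstar ∈ Set.Ico (0:ℝ) ε)
    (v : Fin n → ℝ) (hx : HasDerivAt x v tstar)
    (hon : c ⬝ᵥ x tstar + f = 0)
    (h1 : 0 < (c ᵥ* (A₁ * A₁)) ⬝ᵥ x tstar + (c ᵥ* A₁) ⬝ᵥ e₁)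
    (h2 : (c ᵥ* (A₂ * A₂)) ⬝ᵥ x tstar + (c ᵥ* A₂) ⬝ᵥ e₂ < 0)
    (d : ℝ)
    (hV : HasDerivAt (fun t : ℝ =>
      if c ⬝ᵥ x t + f ≤ 0 then
        (c ⬝ᵥ x t + f) * ((c ᵥ* (A₁ * A₁)) ⬝ᵥ x t + (c ᵥ* A₁) ⬝ᵥ e₁)
      else
        (c ⬝ᵥ x t + f) * ((c ᵥ* (A₂ * A₂)) ⬝ᵥ x t + (c ᵥ* A₂) ⬝ᵥ e₂)) d tstar) :
    c ⬝ᵥ v = 0 ∧ d = 0 := by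
  set a : ℝ := c ⬝ᵥ v with ha
  set g : ℝ → ℝ := fun t => c ⬝ᵥ x t + f with hgdef
  set P : ℝ → ℝ := fun t => (c ᵥ* (A₁ * A₁)) ⬝ᵥ x t + (c ᵥ* A₁) ⬝ᵥ e₁ with hPdef
  set Q : ℝ → ℝ := fun t => (c ᵥ* (A₂ * A₂)) ⬝ᵥ x t + (c ᵥ* A₂) ⬝ᵥ e₂ with hQdef
  set V : ℝ → ℝ := fun t => if g t ≤ 0 then g t * P t else g t * Q t with hVdef
  have hV' : HasDerivAt V d tstar := hV
  have hxi : ∀ i, HasDerivAt (fun t => x t i) (v i) tstar := fun i => hasDerivAt_pi.mp hx i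
  have hg : HasDerivAt g a tstar := by
    have h : HasDerivAt (fun t => ∑ i, c i * x t i) (∑ i, c i * v i) tstar :=
      HasDerivAt.fun_sum fun i _ => (hxi i).const_mul (c i)
    simpa [hgdef, dotProduct, ha] using h.add_const f
  have hg0 : g tstar = 0 := hon
  have hP1 : 0 < P tstar := h1
  have hQ1 : Q tstar < 0 := h2
  have hcont : ∀ w : Fin n → ℝ, Continuous (fun y : Fin n → ℝ => w ⬝ᵥ y) := by
    intro w
    simp only [dotProduct]
    exact continuous_finset_sum _ fun i _ => continuous_const.mul (continuous_apply i)
  have hPc : ContinuousAt P tstar :=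
    (((hcont _).continuousAt).comp hx.continuousAt).add continuousAt_const
  have hQc : ContinuousAt Q tstar :=
    (((hcont _).continuousAt).comp hx.continuousAt).add continuousAt_const
  have hV0 : V tstar = 0 := by simp [hVdef, hg0]
  -- t* is a local max of V
  have hlm : IsLocalMax V tstar := by
    have hP' : ∀ᶠ t in nhds tstar, 0 < P t := hPc.eventually (eventually_gt_nhds hP1)
    have hQ' : ∀ᶠ t in nhds tstar, Q t < 0 := hQc.eventually (eventually_lt_nhds hQ1)
    filter_upwards [hP', hQ'] with t hPt hQt
    rw [hV0]
    by_cases h : g t ≤ 0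
    · simp only [hVdef, if_pos h]; nlinarith
    · simp only [hVdef, if_neg h]; push_neg at h; nlinarith
  have hd : d = 0 := hlm.hasDerivAt_eq_zero hV'
  -- slopes along the right
  have hIoi : ∀ t ∈ Set.Ioi tstar, t ≠ tstar := fun t ht => ne_of_gt ht
  have hslope : Tendsto (slope g tstar) (nhdsWithin tstar (Set.Ioi tstar)) (nhds a) :=
    (hasDerivAt_iff_tendsto_slope.mp hg).mono_left (nhdsWithin_mono _ hIoi)
  have hVslope : Tendsto (slope V tstar) (nhdsWithin tstar (Set.Ioi tstar)) (nhds d) :=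
    (hasDerivAt_iff_tendsto_slope.mp hV').mono_left (nhdsWithin_mono _ hIoi)
  have hslopeg : ∀ t, slope g tstar t = g t / (t - tstar) := by
    intro t; rw [slope_def_field, hg0, sub_zero]
  have hslopeV : ∀ t, slope V tstar t = V t / (t - tstar) := by
    intro t; rw [slope_def_field, hV0, sub_zero]
  have hPt : Tendsto P (nhdsWithin tstar (Set.Ioi tstar)) (nhds (P tstar)) :=
    hPc.tendsto.mono_left nhdsWithin_le_nhds
  have hQt : Tendsto Q (nhdsWithin tstar (Set.Ioi tstar)) (nhds (Q tstar)) :=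
    hQc.tendsto.mono_left nhdsWithin_le_nhds
  have ha0 : a = 0 := by
    by_contra h
    rcases lt_or_gt_of_ne h with hneg | hpos
    · -- a < 0 : eventually g t < 0 for t > t*, so V = g * P there
      have hev : ∀ᶠ t in nhdsWithin tstar (Set.Ioi tstar), slope g tstar t < 0 :=
        hslope.eventually (eventually_lt_nhds hneg)
      have heq : ∀ᶠ t in nhdsWithin tstar (Set.Ioi tstar),
          slope V tstar t = slope g tstar t * P t := by
        filter_upwards [hev, self_mem_nhdsWithin] with t hst ht
        have htt : 0 < t - tstar := sub_pos.mpr ht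
        have hgt : g t < 0 := by
          have := hslopeg t ▸ hst
          exact (div_neg_iff.mp this).resolve_left (fun ⟨_, h2⟩ => absurd htt (not_lt.mpr h2.le)) |>.1
        rw [hslopeV, hslopeg, hVdef]
        simp only [if_pos hgt.le]
        ring
      have hlim : Tendsto (slope V tstar) (nhdsWithin tstar (Set.Ioi tstar))
          (nhds (a * P tstar)) := (hslope.mul hPt).congr' (heq.mono fun t h => h.symm)
      have : d = a * P tstar := tendsto_nhds_unique hVslope hlim
      rw [hd] at this
      nlinarith
    · -- a > 0 : eventually g t > 0 for t > t*, so V = g * Q there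
      have hev : ∀ᶠ t in nhdsWithin tstar (Set.Ioi tstar), 0 < slope g tstar t :=
        hslope.eventually (eventually_gt_nhds hpos)
      have heq : ∀ᶠ t in nhdsWithin tstar (Set.Ioi tstar),
          slope V tstar t = slope g tstar t * Q t := by
        filter_upwards [hev, self_mem_nhdsWithin] with t hst ht
        have htt : 0 < t - tstar := sub_pos.mpr ht
        have hgt : 0 < g t := by
          have := hslopeg t ▸ hst
          exact (div_pos_iff.mp this).resolve_right (fun ⟨_, h2⟩ => absurd htt (not_lt.mpr h2.le)) |>.1
        rw [hslopeV, hslopeg, hVdef]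
        simp only [if_neg (not_le.mpr hgt)]
        ring
      have hlim : Tendsto (slope V tstar) (nhdsWithin tstar (Set.Ioi tstar))
          (nhds (a * Q tstar)) := (hslope.mul hQt).congr' (heq.mono fun t h => h.symm)
      have : d = a * Q tstar := tendsto_nhds_unique hVslope hlim
      rw [hd] at this
      nlinarith
  exact ⟨ha0, hd⟩
end

section
/- Suppose there exists a 2×2 lower triangular matrix M with positive diagonal entries such that [cᵀ; cᵀA₁] = M[cᵀ; cᵀA₂] and [f; cᵀe₁] ≻ M[f; cᵀe₂] (lexicographically). Then for every ξ with cᵀξ + f = 0, at least one of cᵀA₁ξ + cᵀe₁ > 0 or cᵀA₂ξ + cᵀe₂ < 0 holds. -/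
open Matrix

theorem strict_lex_gives_transversality (n : ℕ)
    (A₁ A₂ : Matrix (Fin n) (Fin n) ℝ) (e₁ e₂ c : Fin n → ℝ) (f : ℝ)
    (M : Matrix (Fin 2) (Fin 2) ℝ)
    (hMlow : M 0 1 = 0) (hM00 : 0 < M 0 0) (hM11 : 0 < M 1 1)
    (hP : Matrix.of ![c, c ᵥ* A₁] = M * Matrix.of ![c, c ᵥ* A₂])
    (hq : lexPos (![f, c ⬝ᵥ e₁] - M *ᵥ ![f, c ⬝ᵥ e₂])) :
    ∀ ξ : Fin n → ℝ, c ⬝ᵥ ξ + f = 0 →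
      0 < (c ᵥ* A₁) ⬝ᵥ ξ + c ⬝ᵥ e₁ ∨ (c ᵥ* A₂) ⬝ᵥ ξ + c ⬝ᵥ e₂ < 0 := by
  intro ξ hξ
  have hrow0 : ∀ j, c j = M 0 0 * c j := by
    intro j
    have := congrFun (congrFun hP 0) j
    simpa [Matrix.mul_apply, Fin.sum_univ_two, hMlow] using this
  have hrow1 : ∀ j, (c ᵥ* A₁) j = M 1 0 * c j + M 1 1 * (c ᵥ* A₂) j := by
    intro j
    have := congrFun (congrFun hP 1) j
    simpa [Matrix.mul_apply, Fin.sum_univ_two] using this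
  have hd0 : c ⬝ᵥ ξ = M 0 0 * (c ⬝ᵥ ξ) := by
    simp only [dotProduct, Finset.mul_sum]
    apply Finset.sum_congr rfl
    intro j _
    rw [← mul_assoc, ← hrow0 j]
  have hd1 : (c ᵥ* A₁) ⬝ᵥ ξ = M 1 0 * (c ⬝ᵥ ξ) + M 1 1 * ((c ᵥ* A₂) ⬝ᵥ ξ) := by
    simp only [dotProduct, Finset.mul_sum, ← Finset.sum_add_distrib]
    apply Finset.sum_congr rfl
    intro j _
    rw [hrow1 j]; ring
  obtain ⟨k, hk, hkj⟩ := hq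
  fin_cases k
  · exfalso
    simp [Matrix.mulVec, dotProduct, Fin.sum_univ_two, hMlow] at hk
    have hcξ : c ⬝ᵥ ξ = -f := by linarith
    rw [hcξ] at hd0
    nlinarith
  · simp [Matrix.mulVec, dotProduct, Fin.sum_univ_two] at hk
    have hcξ : c ⬝ᵥ ξ = -f := by linarith
    by_cases h2 : (c ᵥ* A₂) ⬝ᵥ ξ + c ⬝ᵥ e₂ < 0
    · exact Or.inr h2
    · left
      push_neg at h2
      rw [hcξ] at hd1
      simp only [dotProduct] at hd1 h2 ⊢
      nlinarith
end
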